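/- arXiv:2107.00943 — 5 statements merged into one kernel-verified Lean document; each statement's English description precedes it below -/
import Mathlib

section
/- For t > 0, μ > 0 and real ν > 0, the fractional integral index law holds: (1/Γ(ν)) ∫_t^∞ (x - t)^{ν-1} ρ_μ(x) dx = ρ_{ν+μ}(t). -/
open MeasureTheory Real Set

noncomputable def rho (μ t : ℝ) : ℝ :=
  ∫ x in Set.Ioi (0 : ℝ), Real.exp (-t / x - x) * x ^ (μ - 1)

lemma meas_aux (t μ : ℝ) : Measurable (fun u : ℝ => Real.exp (-t / u - u) * u ^ (μ - 1)) := by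
  fun_prop

lemma rho_int {μ t : ℝ} (hμ : 0 < μ) (ht : 0 ≤ t) :
    IntegrableOn (fun u => Real.exp (-t / u - u) * u ^ (μ - 1)) (Ioi 0) := by
  refine (Real.GammaIntegral_convergent hμ).mono' (meas_aux t μ).aestronglyMeasurable ?_
  filter_upwards [ae_restrict_mem measurableSet_Ioi] with u hu
  rw [norm_mul, norm_of_nonneg (exp_pos _).le, norm_of_nonneg (rpow_nonneg (le_of_lt hu) _)]
  gcongr
  · exact rpow_nonneg (le_of_lt hu) _
  · have h := div_nonneg ht (le_of_lt hu)
    rw [neg_div]; linarith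

lemma rho_nonneg (μ t : ℝ) : 0 ≤ rho μ t := by
  apply setIntegral_nonneg measurableSet_Ioi
  intro x hx
  exact mul_nonneg (exp_pos _).le (rpow_nonneg (le_of_lt hx) _)

-- inner x-integral: integrability
lemma inner_integrable {ν t u : ℝ} (hν : 0 < ν) (hu : 0 < u) :
    IntegrableOn (fun x => (x - t) ^ (ν - 1) * Real.exp (-x / u)) (Ioi t) := by
  have h0 : IntegrableOn (fun s : ℝ => s ^ (ν - 1) * Real.exp (-(1/u) * s)) (Ioi 0) := by
    have := integrableOn_rpow_mul_exp_neg_mul_rpow (p := 1) (s := ν - 1) (b := 1/u)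
      (by linarith) one_pos (by positivity)
    simpa using this
  have hmp := measurePreserving_add_right (volume : Measure ℝ) t
  have hemb := measurableEmbedding_addRight t
  have hpre : ((· + t) : ℝ → ℝ) ⁻¹' Ioi t = Ioi 0 := by ext x; simp
  rw [← hmp.integrableOn_comp_preimage hemb (f := fun x => (x - t) ^ (ν - 1) * Real.exp (-x / u)) (s := Ioi t), hpre]
  apply IntegrableOn.congr_fun (h0.const_mul (Real.exp (-t/u))) ?_ measurableSet_Ioi
  intro s hs
  simp only [Function.comp_apply, add_sub_cancel_right]
  rw [show -(s + t)/u = -t/u + -(1/u * s) by field_simp; ring_nf, Real.exp_add]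
  ring_nf

-- inner x-integral: value
lemma inner_int {ν t u : ℝ} (hν : 0 < ν) (hu : 0 < u) :
    ∫ x in Ioi t, (x - t) ^ (ν - 1) * Real.exp (-x / u)
      = Real.exp (-t/u) * (u ^ ν * Real.Gamma ν) := by
  have hmp := measurePreserving_add_right (volume : Measure ℝ) t
  have hemb := measurableEmbedding_addRight t
  have hpre : ((· + t) : ℝ → ℝ) ⁻¹' Ioi t = Ioi 0 := by ext x; simp
  have h1 := hmp.setIntegral_preimage_emb hemb
    (fun x => (x - t) ^ (ν - 1) * Real.exp (-x / u)) (Ioi t)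
  rw [hpre] at h1
  rw [← h1]
  have h2 : ∀ s ∈ Ioi (0:ℝ), (s + t - t) ^ (ν - 1) * Real.exp (-(s + t) / u)
      = Real.exp (-t/u) * (s ^ (ν - 1) * Real.exp (-(1/u * s))) := by
    intro s hs
    rw [add_sub_cancel_right]
    rw [show -(s + t)/u = -t/u + -(1/u * s) by field_simp; ring_nf, Real.exp_add]
    ring
  rw [setIntegral_congr_fun measurableSet_Ioi h2, integral_const_mul,
    integral_rpow_mul_exp_neg_mul_Ioi hν (by positivity : (0:ℝ) < 1/u)]
  rw [one_div_one_div]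

theorem stmt_5 (μ ν t : ℝ) (hμ : 0 < μ) (hν : 0 < ν) (ht : 0 < t) :
    (1 / Real.Gamma ν) * ∫ x in Set.Ioi t, (x - t) ^ (ν - 1) * rho μ x
      = rho (ν + μ) t := by
  set F : ℝ × ℝ → ℝ := fun p => (p.1 - t) ^ (ν - 1) *
    (Real.exp (-p.1 / p.2 - p.2) * p.2 ^ (μ - 1)) with hFdef
  have hF : Measurable F := by unfold F; fun_prop
  have hΓ : 0 < Real.Gamma ν := Real.Gamma_pos_of_pos hν
  -- measurability of x ↦ rho μ x
  have hrho_meas : StronglyMeasurable (fun x : ℝ => rho μ x) := by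
    have hm : StronglyMeasurable (fun p : ℝ × ℝ => Real.exp (-p.1 / p.2 - p.2) * p.2 ^ (μ - 1)) :=
      (by fun_prop : Measurable fun p : ℝ × ℝ =>
        Real.exp (-p.1 / p.2 - p.2) * p.2 ^ (μ - 1)).stronglyMeasurable
    exact hm.integral_prod_right' (ν := volume.restrict (Ioi 0))
  have hg_meas : AEStronglyMeasurable (fun x => (x - t) ^ (ν - 1) * rho μ x)
      (volume.restrict (Ioi t)) :=
    (((by fun_prop : Measurable fun x : ℝ => (x - t) ^ (ν - 1))).mul
      hrho_meas.measurable).aestronglyMeasurable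
  have rho_nn_ae : ∀ s r : ℝ, 0 ≤ᵐ[volume.restrict (Ioi (0:ℝ))]
      fun u => Real.exp (-r / u - u) * u ^ (s - 1) := by
    intro s r
    filter_upwards [ae_restrict_mem measurableSet_Ioi] with u hu
    exact mul_nonneg (exp_pos _).le (rpow_nonneg (le_of_lt hu) _)
  have hnn_g : 0 ≤ᵐ[volume.restrict (Ioi t)] fun x => (x - t) ^ (ν - 1) * rho μ x := by
    filter_upwards [ae_restrict_mem measurableSet_Ioi] with x hx
    exact mul_nonneg (rpow_nonneg (by simp at hx; linarith) _) (rho_nonneg _ _)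
  have key : ∫⁻ x in Ioi t, ENNReal.ofReal ((x - t) ^ (ν - 1) * rho μ x)
      = ENNReal.ofReal (Real.Gamma ν * rho (ν + μ) t) :=
    calc ∫⁻ x in Ioi t, ENNReal.ofReal ((x - t) ^ (ν - 1) * rho μ x)
        = ∫⁻ x in Ioi t, ∫⁻ u in Ioi 0, ENNReal.ofReal (F (x, u)) := by
          refine setLIntegral_congr_fun measurableSet_Ioi (fun x hx => ?_)
          have hx' : t < x := hx
          have hxt : (0:ℝ) ≤ x - t := by linarith
          rw [ENNReal.ofReal_mul (rpow_nonneg hxt _), rho,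
            ofReal_integral_eq_lintegral_ofReal (rho_int hμ (by linarith)) (rho_nn_ae _ _),
            ← lintegral_const_mul' _ _ ENNReal.ofReal_ne_top]
          exact lintegral_congr fun u => by
            rw [← ENNReal.ofReal_mul (rpow_nonneg hxt _)]
      _ = ∫⁻ u in Ioi 0, ∫⁻ x in Ioi t, ENNReal.ofReal (F (x, u)) :=
          lintegral_lintegral_swap (hF.ennreal_ofReal.aemeasurable)
      _ = ∫⁻ u in Ioi 0, ENNReal.ofReal
            (Real.Gamma ν * (Real.exp (-t / u - u) * u ^ (ν + μ - 1))) := by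
          refine setLIntegral_congr_fun measurableSet_Ioi (fun u hu => ?_)
          have hu0 : (0:ℝ) < u := hu
          have hFx : ∀ x : ℝ, F (x, u)
              = (Real.exp (-u) * u ^ (μ - 1)) * ((x - t) ^ (ν - 1) * Real.exp (-x / u)) := by
            intro x
            simp only [hFdef]
            rw [show -x / u - u = -x / u + -u by ring, Real.exp_add]
            ring
          have hInt : IntegrableOn (fun x => F (x, u)) (Ioi t) :=
            (((inner_integrable (t := t) hν hu0).const_mul
              (Real.exp (-u) * u ^ (μ - 1)))).congr (ae_of_all _ fun x => (hFx x).symm)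
          have hnn : 0 ≤ᵐ[volume.restrict (Ioi t)] fun x => F (x, u) := by
            filter_upwards [ae_restrict_mem measurableSet_Ioi] with x hx
            rw [hFx]
            have hxt : (0:ℝ) ≤ x - t := by simp at hx; linarith
            exact mul_nonneg (mul_nonneg (exp_pos _).le (rpow_nonneg hu0.le _))
              (mul_nonneg (rpow_nonneg hxt _) (exp_pos _).le)
          rw [← ofReal_integral_eq_lintegral_ofReal hInt hnn]
          congr 1
          calc ∫ x in Ioi t, F (x, u)
              = ∫ x in Ioi t, (Real.exp (-u) * u ^ (μ - 1)) *
                  ((x - t) ^ (ν - 1) * Real.exp (-x / u)) := by simp_rw [hFx]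
            _ = (Real.exp (-u) * u ^ (μ - 1)) *
                  (Real.exp (-t / u) * (u ^ ν * Real.Gamma ν)) := by
                rw [integral_const_mul, inner_int hν hu0]
            _ = Real.Gamma ν * (Real.exp (-t / u - u) * u ^ (ν + μ - 1)) := by
                rw [show -t / u - u = -t / u + -u by ring, Real.exp_add,
                  show ν + μ - 1 = ν + (μ - 1) by ring, Real.rpow_add hu0]
                ring
      _ = ENNReal.ofReal (Real.Gamma ν)
            * ∫⁻ u in Ioi 0, ENNReal.ofReal (Real.exp (-t / u - u) * u ^ (ν + μ - 1)) := by
          simp_rw [ENNReal.ofReal_mul hΓ.le]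
          rw [lintegral_const_mul' _ _ ENNReal.ofReal_ne_top]
      _ = ENNReal.ofReal (Real.Gamma ν * rho (ν + μ) t) := by
          rw [← ofReal_integral_eq_lintegral_ofReal (rho_int (by linarith) ht.le)
            (rho_nn_ae _ _), ← ENNReal.ofReal_mul hΓ.le]
          rfl
  rw [integral_eq_lintegral_of_nonneg_ae hnn_g hg_meas, key,
    ENNReal.toReal_ofReal (mul_nonneg hΓ.le (rho_nonneg _ _))]
  field_simp
end

section
/- For all n ∈ ℕ, μ > 0, t ≥ 0: ((-1)^n t^n / n!) ρ_μ(t) = ∫₀^∞ x^{μ+n-1} e^{-x - t/x} L_n^μ(x) dx, where L_n^μ denotes the generalized Laguerre polynomial. -/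
/-- The generalized Laguerre polynomial $L_n^μ(x)$. -/
noncomputable def laguerre (n : ℕ) (μ x : ℝ) : ℝ :=
  ∑ k ∈ Finset.range (n + 1),
    (-1) ^ k * (Real.Gamma (μ + n + 1) /
      (Real.Gamma (μ + k + 1) * (Nat.factorial (n - k)))) * x ^ k / (Nat.factorial k)

open Real Filter MeasureTheory Set Topology

/-- coefficients of the k-th derivative of `x^(n-1) * exp(-t/x)` -/
noncomputable def cF (n k j : ℕ) : ℝ :=
  (k.choose j : ℝ) * ∏ i ∈ Finset.range (k - j), ((n : ℝ) - 1 - j - i)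

/-- the k-th derivative of `x^(n-1) * exp(-t/x)` -/
noncomputable def FF (n : ℕ) (t : ℝ) (k : ℕ) (x : ℝ) : ℝ :=
  (∑ j ∈ Finset.range (k + 1), cF n k j * t ^ j * x ^ ((n : ℝ) - 1 - k - j)) * Real.exp (-t / x)

/-- coefficients of the j-th derivative of `x^(μ+n) * exp (-x)` -/
noncomputable def dH (n : ℕ) (μ : ℝ) (j i : ℕ) : ℝ :=
  (-1) ^ (j + i) * (j.choose i : ℝ) * ∏ l ∈ Finset.range i, (μ + n - l)

/-- the j-th derivative of `x^(μ+n) * exp (-x)` -/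
noncomputable def HH (n : ℕ) (μ : ℝ) (j : ℕ) (x : ℝ) : ℝ :=
  (∑ i ∈ Finset.range (j + 1), dH n μ j i * x ^ (μ + n - i)) * Real.exp (-x)

noncomputable def WW (n : ℕ) (μ t : ℝ) (x : ℝ) : ℝ :=
  ∑ k ∈ Finset.range n, (-1) ^ k * (FF n t k x * HH n μ (n - 1 - k) x)


lemma FF_zero (n : ℕ) (t x : ℝ) : FF n t 0 x = x ^ ((n:ℝ) - 1) * Real.exp (-t/x) := by
  simp [FF, cF]

lemma FF_top (n : ℕ) (t x : ℝ) : FF n t n x = t ^ n * x ^ (-(n:ℝ) - 1) * Real.exp (-t/x) := by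
  unfold FF
  rw [Finset.sum_eq_single n]
  · have h1 : cF n n n = 1 := by simp [cF]
    have h2 : (n:ℝ) - 1 - n - n = -(n:ℝ) - 1 := by ring
    rw [h1, h2]; ring
  · intro j hj hjn
    have hj' : j < n := lt_of_le_of_ne (Nat.lt_succ_iff.mp (Finset.mem_range.mp hj)) hjn
    have : cF n n j = 0 := by
      unfold cF
      have hmem : n - 1 - j ∈ Finset.range (n - j) := by
        rw [Finset.mem_range]; omega
      rw [Finset.prod_eq_zero hmem]
      · ring
      · have : ((n - 1 - j : ℕ) : ℝ) = (n:ℝ) - 1 - j := by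
          push_cast [Nat.cast_sub (by omega : j ≤ n - 1), Nat.cast_sub (by omega : 1 ≤ n)]; ring
        rw [this]; ring
    rw [this]; ring
  · intro h; exact absurd (Finset.self_mem_range_succ n) h

lemma HH_zero (n : ℕ) (μ x : ℝ) : HH n μ 0 x = x ^ (μ + n) * Real.exp (-x) := by
  simp [HH, dH]

lemma Gamma_prod (a : ℝ) (ha : 0 < a) (m : ℕ) :
    (∏ l ∈ Finset.range m, (a + l)) * Real.Gamma a = Real.Gamma (a + m) := by
  induction m with
  | zero => simp
  | succ m ih =>
    rw [Finset.prod_range_succ, mul_comm _ ((a:ℝ) + m), mul_assoc, ih]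
    have : a + (m+1 : ℕ) = (a + m) + 1 := by push_cast; ring
    rw [this, Real.Gamma_add_one (by positivity)]


lemma exp_fac_le (t x : ℝ) (ht : 0 ≤ t) (hx : 0 < x) :
    Real.exp (-x - t/x) ≤ Real.exp (-x) :=
  Real.exp_le_exp.mpr (by nlinarith [div_nonneg ht hx.le])

lemma exp_fac_le' (t x : ℝ) (hx : 0 < x) :
    Real.exp (-x - t/x) ≤ Real.exp (-t/x) :=
  Real.exp_le_exp.mpr (by have h := neg_div x t; linarith)

lemma master_tendsto_atTop (q t : ℝ) (ht : 0 ≤ t) :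
    Tendsto (fun x : ℝ => x ^ q * Real.exp (-x - t/x)) atTop (𝓝 0) := by
  have h0 : Tendsto (fun x : ℝ => x ^ q * Real.exp (-1 * x)) atTop (𝓝 0) :=
    tendsto_rpow_mul_exp_neg_mul_atTop_nhds_zero q 1 one_pos
  apply squeeze_zero' (g := fun x : ℝ => x ^ q * Real.exp (-1 * x))
  · filter_upwards [eventually_gt_atTop (0:ℝ)] with x hx
    positivity
  · filter_upwards [eventually_gt_atTop (0:ℝ)] with x hx
    have h1 := exp_fac_le t x ht hx
    have hxq : (0:ℝ) ≤ x ^ q := (Real.rpow_pos_of_pos hx q).le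
    calc x ^ q * Real.exp (-x - t/x) ≤ x ^ q * Real.exp (-x) :=
          mul_le_mul_of_nonneg_left h1 hxq
      _ = x ^ q * Real.exp (-1 * x) := by ring_nf
  · exact h0

lemma master_tendsto_zero (q t : ℝ) (ht : 0 ≤ t) (h : 0 < t ∨ 0 < q) :
    Tendsto (fun x : ℝ => x ^ q * Real.exp (-x - t/x)) (𝓝[>] (0:ℝ)) (𝓝 0) := by
  rcases h with h | h
  · -- 0 < t : dominate by x^q * exp(-t/x) → 0
    have key : Tendsto (fun x : ℝ => x ^ q * Real.exp (-t/x)) (𝓝[>] (0:ℝ)) (𝓝 0) := by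
      have h1 : Tendsto (fun y : ℝ => y ^ (-q) * Real.exp (-t * y)) atTop (𝓝 0) :=
        tendsto_rpow_mul_exp_neg_mul_atTop_nhds_zero (-q) t h
      have h2 : Tendsto (fun x : ℝ => (x⁻¹) ^ (-q) * Real.exp (-t * x⁻¹)) (𝓝[>] (0:ℝ)) (𝓝 0) :=
        h1.comp tendsto_inv_nhdsGT_zero
      apply h2.congr'
      filter_upwards [self_mem_nhdsWithin] with x (hx : 0 < x)
      rw [Real.inv_rpow hx.le, Real.rpow_neg hx.le, inv_inv, div_eq_mul_inv]
    apply squeeze_zero'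
    · filter_upwards [self_mem_nhdsWithin] with x (hx : 0 < x)
      positivity
    · filter_upwards [self_mem_nhdsWithin] with x (hx : 0 < x)
      exact mul_le_mul_of_nonneg_left (exp_fac_le' t x hx) (Real.rpow_pos_of_pos hx q).le
    · exact key
  · -- 0 < q : dominate by x^q → 0
    have key : Tendsto (fun x : ℝ => x ^ q) (𝓝[>] (0:ℝ)) (𝓝 0) := by
      have : ContinuousAt (fun x : ℝ => x ^ q) 0 :=
        Real.continuousAt_rpow_const 0 q (Or.inr h.le)
      have h0 : (0:ℝ) ^ q = 0 := Real.zero_rpow (ne_of_gt h)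
      simpa [h0] using this.continuousWithinAt.tendsto
    apply squeeze_zero'
    · filter_upwards [self_mem_nhdsWithin] with x (hx : 0 < x)
      positivity
    · filter_upwards [self_mem_nhdsWithin] with x (hx : 0 < x)
      calc x ^ q * Real.exp (-x - t/x) ≤ x ^ q * 1 := by
            apply mul_le_mul_of_nonneg_left _ (Real.rpow_pos_of_pos hx q).le
            apply Real.exp_le_one_iff.mpr
            have := div_nonneg ht hx.le
            nlinarith
        _ = x ^ q := mul_one _
    · exact key

lemma master_integrable (q t : ℝ) (ht : 0 ≤ t) (hq : -1 < q) :
    IntegrableOn (fun x : ℝ => x ^ q * Real.exp (-x - t/x)) (Set.Ioi 0) := by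
  have hG : IntegrableOn (fun x : ℝ => Real.exp (-x) * x ^ ((q+1) - 1)) (Set.Ioi 0) :=
    Real.GammaIntegral_convergent (by linarith)
  apply Integrable.mono' (g := fun x : ℝ => Real.exp (-x) * x ^ ((q+1) - 1)) hG
  · apply ContinuousOn.aestronglyMeasurable _ measurableSet_Ioi
    apply ContinuousOn.mul
    · exact fun x hx => ((Real.continuousAt_rpow_const x q
        (Or.inl (ne_of_gt hx))).continuousWithinAt)
    · apply Continuous.comp_continuousOn Real.continuous_exp
      apply ContinuousOn.sub
      · exact continuousOn_id.neg
      · exact continuousOn_const.div continuousOn_id fun x hx => ne_of_gt hx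
  · rw [ae_restrict_iff' measurableSet_Ioi]
    filter_upwards with x
    intro (hx : 0 < x)
    rw [norm_mul, Real.norm_eq_abs, Real.norm_eq_abs, abs_of_pos (Real.rpow_pos_of_pos hx q),
      abs_of_pos (Real.exp_pos _)]
    have : (q + 1) - 1 = q := by ring
    rw [this, mul_comm (Real.exp (-x))]
    exact mul_le_mul_of_nonneg_left (exp_fac_le t x ht hx) (Real.rpow_pos_of_pos hx q).le


lemma cF_rec (n k : ℕ) : ∀ j ∈ Finset.range (k + 2),
    cF n (k+1) j = ((n : ℝ) - 1 - k - j) * cF n k j + (if j = 0 then 0 else cF n k (j-1)) := by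
  intro j hj
  rw [Finset.mem_range] at hj
  match j with
  | 0 =>
    simp only [if_pos rfl, add_zero, Nat.cast_zero]
    unfold cF
    rw [Nat.choose_zero_right, Nat.choose_zero_right, Nat.sub_zero, Nat.sub_zero,
      Finset.prod_range_succ]
    push_cast
    ring
  | (m+1) =>
    rw [if_neg (Nat.succ_ne_zero m), Nat.add_sub_cancel]
    by_cases hmk : m = k
    · subst hmk
      unfold cF
      rw [Nat.choose_self, Nat.choose_succ_self, Nat.sub_self, Nat.sub_self]
      simp
    · have hm : m + 1 ≤ k := by omega
      unfold cF
      have e1 : k + 1 - (m+1) = (k - m - 1) + 1 := by omega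
      have e2 : k - (m+1) = k - m - 1 := by omega
      have e3 : k - m = (k - m - 1) + 1 := by omega
      set P : ℝ := ∏ i ∈ Finset.range (k - m - 1), ((n : ℝ) - 2 - m - i) with hP
      have p1 : ∏ i ∈ Finset.range (k + 1 - (m+1)), ((n : ℝ) - 1 - (m+1:ℕ) - i)
          = P * ((n:ℝ) - 1 - k) := by
        rw [e1, Finset.prod_range_succ, hP]
        have : ((n:ℝ) - 1 - (m+1:ℕ) - ((k - m - 1 : ℕ):ℝ)) = (n:ℝ) - 1 - k := by
          have : ((k - m - 1 : ℕ):ℝ) = (k:ℝ) - m - 1 := by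
            push_cast [Nat.cast_sub (by omega : m ≤ k), Nat.cast_sub (by omega : 1 ≤ k - m)]
            ring
          rw [this]; push_cast; ring
        rw [this]
        congr 1
        apply Finset.prod_congr rfl
        intro i _
        push_cast; ring
      have p2 : ∏ i ∈ Finset.range (k - (m+1)), ((n : ℝ) - 1 - (m+1:ℕ) - i) = P := by
        rw [e2, hP]
        apply Finset.prod_congr rfl
        intro i _
        push_cast; ring
      have p3 : ∏ i ∈ Finset.range (k - m), ((n : ℝ) - 1 - (m:ℕ) - i)
          = ((n:ℝ) - 1 - m) * P := by
        rw [e3, Finset.prod_range_succ', hP]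
        have h0 : ((n:ℝ) - 1 - (m:ℕ) - ((0:ℕ):ℝ)) = (n:ℝ) - 1 - m := by push_cast; ring
        rw [h0, mul_comm]
        congr 1
        apply Finset.prod_congr rfl
        intro i _
        push_cast; ring
      rw [p1, p2, p3]
      have pascal : ((k+1).choose (m+1) : ℝ) = (k.choose m : ℝ) + (k.choose (m+1) : ℝ) := by
        rw [Nat.choose_succ_succ]; push_cast; ring
      have key : ((m:ℝ)+1) * (k.choose (m+1) : ℝ) = ((k:ℝ)-m) * (k.choose m : ℝ) := by
        have h := Nat.choose_succ_right_eq k m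
        have h' : ((k.choose (m+1) * (m+1) : ℕ) : ℝ) = ((k.choose m * (k - m) : ℕ) : ℝ) := by
          rw [h]
        push_cast [Nat.cast_sub (by omega : m ≤ k)] at h'
        linarith
      rw [pascal]
      push_cast
      linear_combination P * key


lemma dH_rec (n : ℕ) (μ : ℝ) (j : ℕ) : ∀ i ∈ Finset.range (j + 2),
    dH n μ (j+1) i = -dH n μ j i + (if i = 0 then 0 else (μ + n - i + 1) * dH n μ j (i-1)) := by
  intro i _
  match i with
  | 0 =>
    simp only [if_pos rfl, add_zero]
    unfold dH
    simp [pow_succ]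
  | (m+1) =>
    rw [if_neg (Nat.succ_ne_zero m), Nat.add_sub_cancel]
    unfold dH
    have hQ : ∏ l ∈ Finset.range (m+1), (μ + n - l)
        = (∏ l ∈ Finset.range m, (μ + n - l)) * (μ + n - m) := Finset.prod_range_succ _ _
    have s1 : (-1:ℝ) ^ (j + 1 + (m+1)) = (-1:ℝ) ^ (j + m) := by
      rw [show j + 1 + (m+1) = (j+m) + 2 from by omega, pow_add]; norm_num
    have s2 : (-1:ℝ) ^ (j + (m+1)) = -(-1:ℝ) ^ (j + m) := by
      rw [show j + (m+1) = (j+m) + 1 from by omega, pow_succ]; ring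
    have pascal : ((j+1).choose (m+1) : ℝ) = (j.choose m : ℝ) + (j.choose (m+1) : ℝ) := by
      rw [Nat.choose_succ_succ]; push_cast; ring
    rw [hQ, s1, s2, pascal]
    have harg : μ + (n:ℝ) - ((m+1:ℕ):ℝ) + 1 = μ + n - m := by push_cast; ring
    rw [harg]
    ring


lemma hasDerivAt_exp_neg_div (t : ℝ) {x : ℝ} (hx : 0 < x) :
    HasDerivAt (fun y : ℝ => Real.exp (-t/y)) (Real.exp (-t/x) * (t/x^2)) x := by
  have h2 := (hasDerivAt_inv (ne_of_gt hx)).const_mul (-t)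
  have e1 : (fun y : ℝ => -t * y⁻¹) = fun y : ℝ => -t/y := by
    funext y; rw [div_eq_mul_inv]
  rw [e1] at h2
  have e2 : -t * -(x^2)⁻¹ = t/x^2 := by field_simp
  rw [e2] at h2
  exact h2.exp

lemma hasDerivAt_FF (n : ℕ) (t : ℝ) (k : ℕ) {x : ℝ} (hx : 0 < x) :
    HasDerivAt (FF n t k) (FF n t (k+1) x) x := by
  have hx' : x ≠ 0 := ne_of_gt hx
  have hS : HasDerivAt
      (fun y : ℝ => ∑ j ∈ Finset.range (k+1), cF n k j * t ^ j * y ^ ((n:ℝ)-1-k-j))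
      (∑ j ∈ Finset.range (k+1),
        cF n k j * t ^ j * (((n:ℝ)-1-k-j) * x ^ ((n:ℝ)-1-k-j - 1))) x := by
    apply HasDerivAt.fun_sum
    intro j _
    exact (Real.hasDerivAt_rpow_const (Or.inl hx')).const_mul _
  have hE := hasDerivAt_exp_neg_div t hx
  have hprod := hS.mul hE
  unfold FF
  convert hprod using 1
  · rfl
  · rfl
  · rfl
  have hsum : ∑ j ∈ Finset.range (k+2), cF n (k+1) j * t ^ j * x ^ ((n:ℝ)-1-(k+1:ℕ)-j)
      = (∑ j ∈ Finset.range (k+1),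
          cF n k j * t ^ j * (((n:ℝ)-1-k-j) * x ^ ((n:ℝ)-1-k-j - 1)))
        + (∑ j ∈ Finset.range (k+1), cF n k j * t ^ j * x ^ ((n:ℝ)-1-k-j)) * (t/x^2) := by
    have expand : ∀ j ∈ Finset.range (k+2),
        cF n (k+1) j * t ^ j * x ^ ((n:ℝ)-1-(k+1:ℕ)-j)
          = (((n:ℝ)-1-k-j) * cF n k j) * t ^ j * x ^ ((n:ℝ)-1-(k+1:ℕ)-j)
            + (if j = 0 then (0:ℝ) else cF n k (j-1)) * t ^ j * x ^ ((n:ℝ)-1-(k+1:ℕ)-j) := by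
      intro j hj
      rw [cF_rec n k j hj]; ring
    rw [Finset.sum_congr rfl expand, Finset.sum_add_distrib]
    congr 1
    · -- part A
      rw [Finset.sum_range_succ]
      have hzero : cF n k (k+1) = 0 := by simp [cF]
      rw [hzero]
      simp only [mul_zero, zero_mul, add_zero]
      apply Finset.sum_congr rfl
      intro j _
      have he : (n:ℝ)-1-((k+1:ℕ):ℝ)-j = ((n:ℝ)-1-k-j) - 1 := by push_cast; ring
      rw [he]; ring
    · -- part B
      rw [Finset.sum_range_succ']
      simp only [Nat.succ_ne_zero, if_false, if_true, zero_mul, add_zero, Nat.add_sub_cancel]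
      rw [Finset.sum_mul]
      apply Finset.sum_congr rfl
      intro j _
      have he : (n:ℝ)-1-((k+1:ℕ):ℝ)-((j+1:ℕ):ℝ) = ((n:ℝ)-1-k-j) - 2 := by push_cast; ring
      have hx2 : x ^ (((n:ℝ)-1-k-j) - 2) = x ^ ((n:ℝ)-1-k-j) / x ^ (2:ℕ) := by
        rw [Real.rpow_sub hx]
        congr 1
        rw [← Real.rpow_natCast x 2]
        norm_num
      rw [he, hx2]
      field_simp
      ring
  rw [hsum]
  ring


lemma hasDerivAt_HH (n : ℕ) (μ : ℝ) (j : ℕ) {x : ℝ} (hx : 0 < x) :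
    HasDerivAt (HH n μ j) (HH n μ (j+1) x) x := by
  have hx' : x ≠ 0 := ne_of_gt hx
  have hS : HasDerivAt
      (fun y : ℝ => ∑ i ∈ Finset.range (j+1), dH n μ j i * y ^ (μ+n-i))
      (∑ i ∈ Finset.range (j+1), dH n μ j i * ((μ+n-i) * x ^ (μ+n-i-1))) x := by
    apply HasDerivAt.fun_sum
    intro i _
    exact (Real.hasDerivAt_rpow_const (Or.inl hx')).const_mul _
  have hE : HasDerivAt (fun y : ℝ => Real.exp (-y)) (-Real.exp (-x)) x := by
    have h := (hasDerivAt_neg x).exp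
    simpa using h
  have hprod := hS.mul hE
  unfold HH
  convert hprod using 1
  · rfl
  · rfl
  · rfl
  have hsum : ∑ i ∈ Finset.range (j+2), dH n μ (j+1) i * x ^ (μ+n-i)
      = (∑ i ∈ Finset.range (j+1), dH n μ j i * ((μ+n-i) * x ^ (μ+n-i-1)))
        - (∑ i ∈ Finset.range (j+1), dH n μ j i * x ^ (μ+n-i)) := by
    have expand : ∀ i ∈ Finset.range (j+2),
        dH n μ (j+1) i * x ^ (μ+n-i)
          = -(dH n μ j i * x ^ (μ+n-i))
            + (if i = 0 then (0:ℝ) else (μ+n-i+1) * dH n μ j (i-1)) * x ^ (μ+n-i) := by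
      intro i hi
      rw [dH_rec n μ j i hi]; ring
    have hA : ∑ i ∈ Finset.range (j+2), -(dH n μ j i * x ^ (μ+n-i))
        = -∑ i ∈ Finset.range (j+1), dH n μ j i * x ^ (μ+n-i) := by
      rw [Finset.sum_range_succ]
      have hzero : dH n μ j (j+1) = 0 := by simp [dH]
      rw [hzero]
      simp
    have hB : ∑ i ∈ Finset.range (j+2),
          (if i = 0 then (0:ℝ) else (μ+n-i+1) * dH n μ j (i-1)) * x ^ (μ+n-i)
        = ∑ i ∈ Finset.range (j+1), dH n μ j i * ((μ+n-i) * x ^ (μ+n-i-1)) := by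
      rw [Finset.sum_range_succ']
      simp only [Nat.succ_ne_zero, if_false, if_true, zero_mul, add_zero, Nat.add_sub_cancel]
      apply Finset.sum_congr rfl
      intro i _
      have h1 : μ + (n:ℝ) - ((i+1:ℕ):ℝ) + 1 = μ + n - i := by push_cast; ring
      have h2 : μ + (n:ℝ) - ((i+1:ℕ):ℝ) = μ + n - i - 1 := by push_cast; ring
      rw [h1, h2]
      ring
    rw [Finset.sum_congr rfl expand, Finset.sum_add_distrib, hA, hB]
    ring
  rw [hsum]
  ring


lemma hasDerivAt_WW (n : ℕ) (μ t : ℝ) {x : ℝ} (hx : 0 < x) :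
    HasDerivAt (WW n μ t)
      (FF n t 0 x * HH n μ n x - (-1:ℝ)^n * (FF n t n x * HH n μ 0 x)) x := by
  have key : ∀ k ∈ Finset.range n,
      HasDerivAt (fun y => (-1:ℝ)^k * (FF n t k y * HH n μ (n-1-k) y))
        ((-1:ℝ)^k * (FF n t k x * HH n μ (n-k) x)
          - (-1:ℝ)^(k+1) * (FF n t (k+1) x * HH n μ (n-(k+1)) x)) x := by
    intro k hk
    have hk' : k < n := Finset.mem_range.mp hk
    have h := ((hasDerivAt_FF n t k hx).mul (hasDerivAt_HH n μ (n-1-k) hx)).const_mul ((-1:ℝ)^k)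
    have e1 : n-1-k+1 = n-k := by omega
    have e2 : n-(k+1) = n-1-k := by omega
    rw [e1] at h
    convert h using 1
    · rfl
    · rfl
    · rfl
    rw [e2, pow_succ]
    ring
  have hsum := HasDerivAt.sum key
  unfold WW
  convert hsum using 1
  · rfl
  · rfl
  · ext y; rw [Finset.sum_apply]
  rw [Finset.sum_range_sub' (fun k => (-1:ℝ)^k * (FF n t k x * HH n μ (n-k) x))]
  simp

lemma HH_top (n : ℕ) (μ : ℝ) (hμ : 0 < μ) {x : ℝ} (hx : 0 < x) :
    HH n μ n x = (n.factorial : ℝ) * (x ^ μ * Real.exp (-x)) * laguerre n μ x := by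
  unfold HH laguerre
  rw [← Finset.sum_range_reflect]
  have : (n.factorial : ℝ) * (x ^ μ * Real.exp (-x)) *
      ∑ k ∈ Finset.range (n + 1), (-1) ^ k * (Real.Gamma (μ + n + 1) /
        (Real.Gamma (μ + k + 1) * (Nat.factorial (n - k)))) * x ^ k / (Nat.factorial k)
    = (∑ k ∈ Finset.range (n + 1), (n.factorial : ℝ) * ((-1) ^ k * (Real.Gamma (μ + n + 1) /
        (Real.Gamma (μ + k + 1) * (Nat.factorial (n - k)))) * x ^ k / (Nat.factorial k)) * x ^ μ)
        * Real.exp (-x) := by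
    rw [Finset.mul_sum, Finset.sum_mul]
    apply Finset.sum_congr rfl
    intro k _
    ring
  rw [this]
  congr 1
  apply Finset.sum_congr rfl
  intro k hk
  have hkn : k ≤ n := by
    have := Finset.mem_range.mp hk; omega
  have hc1 : n + 1 - 1 - k = n - k := by omega
  rw [hc1]
  -- exponent
  have hexp : μ + (n:ℝ) - ((n-k : ℕ):ℝ) = μ + k := by
    rw [Nat.cast_sub hkn]; ring
  -- sign
  have hsign : ((-1:ℝ)) ^ (n + (n - k)) = (-1:ℝ) ^ k := by
    rw [show n + (n-k) = k + 2 * (n-k) from by omega, pow_add, pow_mul]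
    norm_num
  -- choose symm
  have hchoose : (n.choose (n-k) : ℝ) = (n.choose k : ℝ) := by
    rw [Nat.choose_symm hkn]
  -- product = Gamma ratio
  have hqr : (∏ l ∈ Finset.range (n-k), (μ + (n:ℝ) - l)) * Real.Gamma (μ+k+1)
      = Real.Gamma (μ+n+1) := by
    have h1 : ∏ l ∈ Finset.range (n-k), (μ + (n:ℝ) - l)
        = ∏ l ∈ Finset.range (n-k), ((μ+(k:ℝ)+1) + l) := by
      rw [← Finset.prod_range_reflect (fun l => μ+(k:ℝ)+1+l) (n-k)]
      apply Finset.prod_congr rfl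
      intro l hl
      have hl' : l < n - k := Finset.mem_range.mp hl
      rw [Nat.cast_sub (by omega : l ≤ n - k - 1), Nat.cast_sub (by omega : 1 ≤ n - k),
        Nat.cast_sub hkn]
      ring
    rw [h1, Gamma_prod (μ+k+1) (by positivity) (n-k)]
    congr 1
    rw [Nat.cast_sub hkn]; ring
  -- factorial identity
  have hfac : (n.choose k : ℝ) * (k.factorial : ℝ) * ((n-k).factorial : ℝ)
      = (n.factorial : ℝ) := by
    exact_mod_cast congrArg (Nat.cast : ℕ → ℝ) (Nat.choose_mul_factorial_mul_factorial hkn)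
  unfold dH
  rw [hexp, hsign, hchoose, Real.rpow_add hx, Real.rpow_natCast]
  have hG1 : Real.Gamma (μ+k+1) ≠ 0 := ne_of_gt (Real.Gamma_pos_of_pos (by positivity))
  have hf1 : ((n-k).factorial : ℝ) ≠ 0 := Nat.cast_ne_zero.mpr (Nat.factorial_ne_zero _)
  have hf2 : ((k).factorial : ℝ) ≠ 0 := Nat.cast_ne_zero.mpr (Nat.factorial_ne_zero _)
  have hQ' : (∏ l ∈ Finset.range (n-k), (μ + (n:ℝ) - l))
      = Real.Gamma (μ+n+1) / Real.Gamma (μ+k+1) := by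
    rw [eq_div_iff hG1]; exact hqr
  rw [hQ', ← hfac]
  field_simp


theorem stmt_6 (n : ℕ) (μ t : ℝ) (hμ : 0 < μ) (ht : 0 ≤ t) :
    ((-1 : ℝ) ^ n * t ^ n / (Nat.factorial n)) * rho μ t
      = ∫ x in Set.Ioi (0 : ℝ),
          x ^ (μ + n - 1) * Real.exp (-x - t / x) * laguerre n μ x := by
  set R : ℝ → ℝ := fun x => x ^ (μ + n - 1) * Real.exp (-x - t / x) * laguerre n μ x with hR
  set L : ℝ → ℝ := fun x => x ^ (μ - 1) * Real.exp (-x - t / x) with hL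
  set G : ℝ → ℝ := fun x => (n.factorial : ℝ) * R x - ((-1:ℝ)^n * t^n) * L x with hG
  -- Step A: derivative
  have stepA : ∀ x ∈ Set.Ioi (0:ℝ), HasDerivAt (WW n μ t) (G x) x := by
    intro x hx
    have hx' : (0:ℝ) < x := hx
    have h := hasDerivAt_WW n μ t hx'
    have claim1 : FF n t 0 x * HH n μ n x = (n.factorial : ℝ) * R x := by
      rw [FF_zero, HH_top n μ hμ hx', hR]
      have e1 : x ^ ((n:ℝ) - 1) * x ^ μ = x ^ (μ + n - 1) := by
        rw [← Real.rpow_add hx']; congr 1; ring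
      have e2 : Real.exp (-t/x) * Real.exp (-x) = Real.exp (-x - t/x) := by
        rw [← Real.exp_add]; congr 1; ring
      calc x ^ ((n:ℝ) - 1) * Real.exp (-t/x) *
            ((n.factorial : ℝ) * (x ^ μ * Real.exp (-x)) * laguerre n μ x)
          = (n.factorial : ℝ) * ((x ^ ((n:ℝ) - 1) * x ^ μ) *
              (Real.exp (-t/x) * Real.exp (-x)) * laguerre n μ x) := by ring
        _ = (n.factorial : ℝ) * (x ^ (μ + n - 1) * Real.exp (-x - t/x) * laguerre n μ x) := by
              rw [e1, e2]
    have claim2 : FF n t n x * HH n μ 0 x = t^n * L x := by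
      rw [FF_top, HH_zero, hL]
      have e1 : x ^ (-(n:ℝ) - 1) * x ^ (μ + n) = x ^ (μ - 1) := by
        rw [← Real.rpow_add hx']; congr 1; ring
      have e2 : Real.exp (-t/x) * Real.exp (-x) = Real.exp (-x - t/x) := by
        rw [← Real.exp_add]; congr 1; ring
      calc t ^ n * x ^ (-(n:ℝ) - 1) * Real.exp (-t/x) * (x ^ (μ + n) * Real.exp (-x))
          = t ^ n * ((x ^ (-(n:ℝ) - 1) * x ^ (μ + n)) *
              (Real.exp (-t/x) * Real.exp (-x))) := by ring
        _ = t ^ n * (x ^ (μ - 1) * Real.exp (-x - t/x)) := by rw [e1, e2]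
    rw [claim1, claim2] at h
    have : (n.factorial : ℝ) * R x - (-1:ℝ)^n * (t^n * L x) = G x := by rw [hG]; ring
    rwa [this] at h
  -- Step B: integrability
  have hIR : IntegrableOn R (Set.Ioi (0:ℝ)) := by
    have hsum : IntegrableOn (fun x : ℝ => ∑ k ∈ Finset.range (n+1),
        ((-1:ℝ) ^ k * (Real.Gamma (μ + n + 1) /
          (Real.Gamma (μ + k + 1) * (Nat.factorial (n - k)))) / (Nat.factorial k)) *
          (x ^ (μ + n - 1 + k) * Real.exp (-x - t/x))) (Set.Ioi (0:ℝ)) := by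
      apply MeasureTheory.integrable_finset_sum
      intro k _
      have h1 : (0:ℝ) ≤ n := Nat.cast_nonneg n
      have h2 : (0:ℝ) ≤ k := Nat.cast_nonneg k
      exact (master_integrable (μ + n - 1 + k) t ht (by linarith)).const_mul _
    apply hsum.congr_fun _ measurableSet_Ioi
    intro x hx
    have hx' : (0:ℝ) < x := hx
    show _ = x ^ (μ + (n:ℝ) - 1) * Real.exp (-x - t / x) * laguerre n μ x
    unfold laguerre
    rw [Finset.mul_sum]
    apply Finset.sum_congr rfl
    intro k _
    rw [Real.rpow_add hx', Real.rpow_natCast]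
    ring
  have hIL : IntegrableOn L (Set.Ioi (0:ℝ)) := by
    rw [hL]; exact master_integrable (μ - 1) t ht (by linarith)
  have hIG : IntegrableOn G (Set.Ioi (0:ℝ)) := by
    rw [hG]; exact (hIR.const_mul _).sub (hIL.const_mul _)
  -- Step C: limits of WW
  have expandWW : ∀ x : ℝ, 0 < x → WW n μ t x
      = ∑ k ∈ Finset.range n, ∑ j ∈ Finset.range (k+1), ∑ i ∈ Finset.range (n-1-k+1),
          ((-1:ℝ)^k * cF n k j * dH n μ (n-1-k) i) * t^j *
            (x ^ (((n:ℝ) - 1 - k - j) + (μ + n - i)) * Real.exp (-x - t/x)) := by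
    intro x hx
    unfold WW FF HH
    apply Finset.sum_congr rfl
    intro k _
    have hmul := Finset.sum_mul_sum (Finset.range (k+1)) (Finset.range (n-1-k+1))
        (fun j => cF n k j * t ^ j * x ^ ((n:ℝ) - 1 - k - j))
        (fun i => dH n μ (n-1-k) i * x ^ (μ + (n:ℝ) - i))
    have hE : Real.exp (-t/x) * Real.exp (-x) = Real.exp (-x - t/x) := by
      rw [← Real.exp_add]; congr 1; ring
    calc (-1:ℝ)^k * ((∑ j ∈ Finset.range (k+1), cF n k j * t ^ j * x ^ ((n:ℝ) - 1 - k - j))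
            * Real.exp (-t/x)
          * ((∑ i ∈ Finset.range (n-1-k+1), dH n μ (n-1-k) i * x ^ (μ + (n:ℝ) - i))
            * Real.exp (-x)))
        = ((∑ j ∈ Finset.range (k+1), cF n k j * t ^ j * x ^ ((n:ℝ) - 1 - k - j))
            * (∑ i ∈ Finset.range (n-1-k+1), dH n μ (n-1-k) i * x ^ (μ + (n:ℝ) - i)))
          * ((-1:ℝ)^k * (Real.exp (-t/x) * Real.exp (-x))) := by ring
      _ = (∑ j ∈ Finset.range (k+1), ∑ i ∈ Finset.range (n-1-k+1),
            (cF n k j * t ^ j * x ^ ((n:ℝ) - 1 - k - j))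
              * (dH n μ (n-1-k) i * x ^ (μ + (n:ℝ) - i)))
          * ((-1:ℝ)^k * (Real.exp (-t/x) * Real.exp (-x))) := by rw [hmul]
      _ = ∑ j ∈ Finset.range (k+1), ∑ i ∈ Finset.range (n-1-k+1),
            ((-1:ℝ)^k * cF n k j * dH n μ (n-1-k) i) * t^j *
              (x ^ (((n:ℝ) - 1 - k - j) + (μ + (n:ℝ) - i)) * Real.exp (-x - t/x)) := by
          rw [Finset.sum_mul]
          apply Finset.sum_congr rfl
          intro j _
          rw [Finset.sum_mul]
          apply Finset.sum_congr rfl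
          intro i _
          rw [Real.rpow_add hx ((n:ℝ) - 1 - k - j) (μ + (n:ℝ) - i), ← hE]
          ring
  have term_tendsto : ∀ (C q : ℝ) (j : ℕ),
      (0 < t ∨ 0 < q ∨ (t = 0 ∧ 1 ≤ j)) →
      Tendsto (fun x : ℝ => C * t^j * (x ^ q * Real.exp (-x - t/x))) (𝓝[>] (0:ℝ)) (𝓝 0) := by
    intro C q j h
    rcases h with h | h | ⟨h0, hj⟩
    · simpa using (master_tendsto_zero q t ht (Or.inl h)).const_mul (C * t^j)
    · simpa using (master_tendsto_zero q t ht (Or.inr h)).const_mul (C * t^j)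
    · have : (fun x : ℝ => C * t^j * (x ^ q * Real.exp (-x - t/x))) = fun _ => 0 := by
        funext x
        rw [h0, zero_pow (by omega : j ≠ 0)]
        ring
      rw [this]
      exact tendsto_const_nhds
  have cond : ∀ k ∈ Finset.range n, ∀ i ∈ Finset.range (n-1-k+1), ∀ j : ℕ,
      (0 < t ∨ 0 < ((n:ℝ) - 1 - k - j) + (μ + n - i) ∨ (t = 0 ∧ 1 ≤ j)) := by
    intro k hk i hi j
    rcases lt_or_eq_of_le ht with h | h
    · exact Or.inl h
    · match j with
      | 0 =>
        apply Or.inr; apply Or.inl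
        have hk' : k < n := Finset.mem_range.mp hk
        have hi' : i ≤ n - 1 - k := by
          have := Finset.mem_range.mp hi; omega
        have h1 : (k:ℝ) + 1 ≤ n := by exact_mod_cast hk'
        have h2 : (i:ℝ) + (k:ℝ) + 1 ≤ n := by
          have : i + k + 1 ≤ n := by omega
          exact_mod_cast this
        push_cast
        linarith
      | (j+1) => exact Or.inr (Or.inr ⟨h.symm, by omega⟩)
  have hW0 : Tendsto (WW n μ t) (𝓝[>] (0:ℝ)) (𝓝 0) := by
    have base : Tendsto (fun x : ℝ =>
        ∑ k ∈ Finset.range n, ∑ j ∈ Finset.range (k+1), ∑ i ∈ Finset.range (n-1-k+1),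
          ((-1:ℝ)^k * cF n k j * dH n μ (n-1-k) i) * t^j *
            (x ^ (((n:ℝ) - 1 - k - j) + (μ + n - i)) * Real.exp (-x - t/x)))
        (𝓝[>] (0:ℝ)) (𝓝 0) := by
      have base' : Tendsto (fun x : ℝ =>
          ∑ k ∈ Finset.range n, ∑ j ∈ Finset.range (k+1), ∑ i ∈ Finset.range (n-1-k+1),
            ((-1:ℝ)^k * cF n k j * dH n μ (n-1-k) i) * t^j *
              (x ^ (((n:ℝ) - 1 - k - j) + (μ + n - i)) * Real.exp (-x - t/x)))
          (𝓝[>] (0:ℝ)) (𝓝 (∑ k ∈ Finset.range n, ∑ j ∈ Finset.range (k+1),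
            ∑ i ∈ Finset.range (n-1-k+1), (0:ℝ))) := by
        apply tendsto_finset_sum; intro k hk
        apply tendsto_finset_sum; intro j hj
        apply tendsto_finset_sum; intro i hi
        exact term_tendsto _ _ j (cond k hk i hi j)
      simpa using base'
    apply base.congr'
    filter_upwards [self_mem_nhdsWithin] with x (hx : (0:ℝ) < x)
    exact (expandWW x hx).symm
  have hWtop : Tendsto (WW n μ t) atTop (𝓝 0) := by
    have base : Tendsto (fun x : ℝ =>
        ∑ k ∈ Finset.range n, ∑ j ∈ Finset.range (k+1), ∑ i ∈ Finset.range (n-1-k+1),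
          ((-1:ℝ)^k * cF n k j * dH n μ (n-1-k) i) * t^j *
            (x ^ (((n:ℝ) - 1 - k - j) + (μ + n - i)) * Real.exp (-x - t/x)))
        atTop (𝓝 0) := by
      have base' : Tendsto (fun x : ℝ =>
          ∑ k ∈ Finset.range n, ∑ j ∈ Finset.range (k+1), ∑ i ∈ Finset.range (n-1-k+1),
            ((-1:ℝ)^k * cF n k j * dH n μ (n-1-k) i) * t^j *
              (x ^ (((n:ℝ) - 1 - k - j) + (μ + n - i)) * Real.exp (-x - t/x)))
          atTop (𝓝 (∑ k ∈ Finset.range n, ∑ j ∈ Finset.range (k+1),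
            ∑ i ∈ Finset.range (n-1-k+1), (0:ℝ))) := by
        apply tendsto_finset_sum; intro k _
        apply tendsto_finset_sum; intro j _
        apply tendsto_finset_sum; intro i _
        simpa using (master_tendsto_atTop _ t ht).const_mul
          (((-1:ℝ)^k * cF n k j * dH n μ (n-1-k) i) * t^j)
      simpa using base'
    apply base.congr'
    filter_upwards [eventually_gt_atTop (0:ℝ)] with x hx
    exact (expandWW x hx).symm
  -- Step D: FTC
  have keyD : ∫ x in Set.Ioi (0:ℝ), G x = 0 := by
    have h1 : ∀ ε : ℝ, 0 < ε → ∫ x in Set.Ioi ε, G x = 0 - WW n μ t ε := by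
      intro ε hε
      apply integral_Ioi_of_hasDerivAt_of_tendsto
      · exact (stepA ε hε).continuousAt.continuousWithinAt
      · intro x hx
        exact stepA x (lt_trans hε hx)
      · exact hIG.mono_set (Set.Ioi_subset_Ioi hε.le)
      · exact hWtop
    have hseq : Tendsto (fun i : ℕ => ∫ x in Set.Ioi (1/((i:ℝ)+1)), G x) atTop
        (𝓝 (∫ x in Set.Ioi (0:ℝ), G x)) := by
      have hU : (⋃ i : ℕ, Set.Ioi (1/((i:ℝ)+1))) = Set.Ioi (0:ℝ) := by
        ext x
        simp only [Set.mem_iUnion, Set.mem_Ioi]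
        constructor
        · rintro ⟨i, hi⟩
          have : (0:ℝ) < 1/((i:ℝ)+1) := by positivity
          linarith
        · intro hx
          obtain ⟨i, hi⟩ := exists_nat_one_div_lt hx
          exact ⟨i, hi⟩
      have := MeasureTheory.tendsto_setIntegral_of_monotone
        (s := fun i : ℕ => Set.Ioi (1/((i:ℝ)+1))) (f := G)
        (fun i => measurableSet_Ioi)
        (by
          intro a b hab
          apply Set.Ioi_subset_Ioi
          apply one_div_le_one_div_of_le
          · positivity
          · have : (a:ℝ) ≤ b := Nat.cast_le.mpr hab
            linarith)
        (by rw [hU]; exact hIG)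
      rwa [hU] at this
    have hseq2 : Tendsto (fun i : ℕ => ∫ x in Set.Ioi (1/((i:ℝ)+1)), G x) atTop (𝓝 0) := by
      have heq : (fun i : ℕ => ∫ x in Set.Ioi (1/((i:ℝ)+1)), G x)
          = fun i : ℕ => 0 - WW n μ t (1/((i:ℝ)+1)) := by
        funext i
        exact h1 _ (by positivity)
      rw [heq]
      have htend : Tendsto (fun i : ℕ => 1/((i:ℝ)+1)) atTop (𝓝[>] (0:ℝ)) := by
        apply tendsto_nhdsWithin_iff.mpr
        constructor
        · exact tendsto_one_div_add_atTop_nhds_zero_nat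
        · filter_upwards with i
          show (0:ℝ) < 1/((i:ℝ)+1)
          positivity
      have h2 := (hW0.comp htend).neg
      simp only [neg_zero] at h2
      apply h2.congr
      intro i
      show -(WW n μ t (1/((i:ℝ)+1))) = 0 - WW n μ t (1/((i:ℝ)+1))
      ring
    exact tendsto_nhds_unique hseq hseq2
  -- Step E: conclude
  have split : ∫ x in Set.Ioi (0:ℝ), G x
      = (n.factorial : ℝ) * (∫ x in Set.Ioi (0:ℝ), R x)
        - ((-1:ℝ)^n * t^n) * (∫ x in Set.Ioi (0:ℝ), L x) := by
    rw [hG]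
    rw [MeasureTheory.integral_sub (hIR.const_mul _) (hIL.const_mul _)]
    rw [MeasureTheory.integral_const_mul, MeasureTheory.integral_const_mul]
  have hrho : rho μ t = ∫ x in Set.Ioi (0:ℝ), L x := by
    unfold rho
    apply MeasureTheory.setIntegral_congr_fun measurableSet_Ioi
    intro x _
    rw [hL]
    show Real.exp (-t / x - x) * x ^ (μ - 1) = x ^ (μ - 1) * Real.exp (-x - t/x)
    rw [mul_comm]
    congr 2
    ring
  rw [hrho]
  have hfac : (n.factorial : ℝ) ≠ 0 := Nat.cast_ne_zero.mpr (Nat.factorial_ne_zero n)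
  rw [split] at keyD
  field_simp
  linarith [keyD]
end

section
/- Let ν > -1, 0 < λ < 1, t ≥ 0 and define the weight ω_k(t,λ) = ρ_{k+ν+1}(t) λ^k / k!. Then for all k ≥ 2, the Pearson-type equation k(k-1) ω_k − (k-1)(k+ν) λ ω_{k-1} − t λ² ω_{k-2} = 0 holds. -/
open MeasureTheory Set Filter Real Topology

set_option maxHeartbeats 1000000 in
lemma rho_integrable {α t : ℝ} (hα : 0 < α) (ht : 0 ≤ t) :
    IntegrableOn (fun x : ℝ => Real.exp (-t / x - x) * x ^ (α - 1)) (Ioi (0:ℝ)) := by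
  have hG := Real.GammaIntegral_convergent hα
  have hc : ContinuousOn (fun x : ℝ => Real.exp (-t / x - x) * x ^ (α - 1)) (Ioi (0:ℝ)) := by
    intro x hx
    have hx0 : (0:ℝ) < x := hx
    apply ContinuousAt.continuousWithinAt
    have h1 : ContinuousAt (fun x : ℝ => -t / x - x) x :=
      (continuousAt_const.div continuousAt_id hx0.ne').sub continuousAt_id
    exact (Real.continuous_exp.continuousAt.comp h1).mul
      (Real.continuousAt_rpow_const x _ (Or.inl hx0.ne'))
  refine MeasureTheory.Integrable.mono hG (hc.aestronglyMeasurable measurableSet_Ioi) ?_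
  · filter_upwards [ae_restrict_mem measurableSet_Ioi] with x hx
    have hx0 : (0:ℝ) < x := hx
    have h1 : Real.exp (-t / x - x) ≤ Real.exp (-x) := by
      apply Real.exp_le_exp.2
      have h0 : 0 ≤ t / x := div_nonneg ht hx0.le
      have hnd : -t / x = -(t / x) := neg_div _ _
      linarith
    have hp : (0:ℝ) ≤ x ^ (α - 1) := Real.rpow_nonneg hx0.le _
    have h2 : (0:ℝ) ≤ Real.exp (-t / x - x) * x ^ (α - 1) :=
      mul_nonneg (Real.exp_pos _).le hp
    rw [Real.norm_eq_abs, Real.norm_eq_abs, abs_of_nonneg h2,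
      abs_of_nonneg (mul_nonneg (Real.exp_pos _).le hp)]
    exact mul_le_mul_of_nonneg_right h1 hp

lemma rho_rec {μ t : ℝ} (hμ : 1 < μ) (ht : 0 ≤ t) :
    rho (μ + 1) t = μ * rho μ t + t * rho (μ - 1) t := by
  set F : ℝ → ℝ := fun x => Real.exp (-t / x - x) * x ^ μ with hF
  set G : ℝ → ℝ := fun x =>
    t * (Real.exp (-t / x - x) * x ^ (μ - 1 - 1))
      - Real.exp (-t / x - x) * x ^ (μ + 1 - 1)
      + μ * (Real.exp (-t / x - x) * x ^ (μ - 1)) with hG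
  have hμ0 : (0:ℝ) < μ := by linarith
  -- derivative
  have hderiv : ∀ x ∈ Ioi (0:ℝ), HasDerivAt F (G x) x := by
    intro x hx
    have hx0 : (0:ℝ) < x := hx
    have h1 : HasDerivAt (fun x : ℝ => -t / x - x)
        (t / x ^ 2 - 1) x := by
      have hdiv := ((hasDerivAt_const x (-t)).div (hasDerivAt_id x) hx0.ne').sub
        (hasDerivAt_id x)
      simp only [id] at hdiv
      refine HasDerivAt.congr_deriv hdiv ?_
      ring
    have hexp := h1.exp
    have hpow : HasDerivAt (fun x : ℝ => x ^ μ) (μ * x ^ (μ - 1)) x :=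
      Real.hasDerivAt_rpow_const (Or.inl hx0.ne')
    have := hexp.mul hpow
    refine HasDerivAt.congr_deriv this ?_
    have e2 : x ^ (μ + 1 - 1) = x ^ μ := by ring_nf
    have e3 : x ^ (μ - 1 - 1) = x ^ μ / x ^ (2:ℕ) := by
      rw [eq_div_iff (by positivity : (0:ℝ) < x ^ (2:ℕ)).ne',
        ← Real.rpow_natCast x 2, ← Real.rpow_add hx0]
      ring_nf
    simp only [hG, e2, e3]
    field_simp
  -- integrability of the three pieces
  have I1 := rho_integrable (by linarith : (0:ℝ) < μ - 1) ht
  have I2 := rho_integrable (by linarith : (0:ℝ) < μ + 1) ht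
  have I3 := rho_integrable hμ0 ht
  have hGint : IntegrableOn G (Ioi (0:ℝ)) := by
    have h1 : IntegrableOn (fun x : ℝ => t * (Real.exp (-t / x - x) * x ^ (μ - 1 - 1)))
        (Ioi (0:ℝ)) := I1.const_mul t
    have h3 : IntegrableOn (fun x : ℝ => μ * (Real.exp (-t / x - x) * x ^ (μ - 1)))
        (Ioi (0:ℝ)) := I3.const_mul μ
    exact (h1.sub I2).add h3
  -- limit at infinity
  have htop : Tendsto F atTop (𝓝 0) := by
    have hb : Tendsto (fun x : ℝ => x ^ μ * Real.exp (-1 * x)) atTop (𝓝 0) :=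
      tendsto_rpow_mul_exp_neg_mul_atTop_nhds_zero μ 1 one_pos
    apply squeeze_zero' (g := fun x : ℝ => x ^ μ * Real.exp (-1 * x))
    · filter_upwards [eventually_gt_atTop (0:ℝ)] with x hx
      exact mul_nonneg (Real.exp_pos _).le (Real.rpow_nonneg hx.le _)
    · filter_upwards [eventually_gt_atTop (0:ℝ)] with x hx
      have h1 : Real.exp (-t / x - x) ≤ Real.exp (-1 * x) := by
        apply Real.exp_le_exp.2
        have h0 : 0 ≤ t / x := div_nonneg ht hx.le
        have hnd : -t / x = -(t / x) := neg_div _ _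
        linarith
      calc Real.exp (-t / x - x) * x ^ μ ≤ Real.exp (-1 * x) * x ^ μ :=
            mul_le_mul_of_nonneg_right h1 (Real.rpow_nonneg hx.le _)
        _ = x ^ μ * Real.exp (-1 * x) := mul_comm _ _
    · exact hb
  -- continuity at 0 from the right
  have hF0 : F 0 = 0 := by
    simp [hF, Real.zero_rpow hμ0.ne']
  have hcont : ContinuousWithinAt F (Ici (0:ℝ)) 0 := by
    rw [ContinuousWithinAt, hF0]
    apply squeeze_zero' (g := fun x : ℝ => x ^ μ)
    · filter_upwards [self_mem_nhdsWithin] with x hx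
      rcases eq_or_lt_of_le (Set.mem_Ici.mp hx : (0:ℝ) ≤ x) with h | h
      · simp [hF, ← h, Real.zero_rpow hμ0.ne']
      · exact mul_nonneg (Real.exp_pos _).le (Real.rpow_nonneg h.le _)
    · filter_upwards [self_mem_nhdsWithin] with x hx
      rcases eq_or_lt_of_le (Set.mem_Ici.mp hx : (0:ℝ) ≤ x) with h | h
      · simp [hF, ← h, Real.zero_rpow hμ0.ne']
      · have h1 : Real.exp (-t / x - x) ≤ 1 := by
          rw [← Real.exp_zero]
          apply Real.exp_le_exp.2
          have h0 : 0 ≤ t / x := div_nonneg ht h.le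
          have hnd : -t / x = -(t / x) := neg_div _ _
          linarith
        calc Real.exp (-t / x - x) * x ^ μ ≤ 1 * x ^ μ :=
              mul_le_mul_of_nonneg_right h1 (Real.rpow_nonneg h.le _)
          _ = x ^ μ := one_mul _
    · have : ContinuousAt (fun x : ℝ => x ^ μ) 0 :=
        Real.continuousAt_rpow_const 0 μ (Or.inr hμ0.le)
      have h0 : (0:ℝ) ^ μ = 0 := Real.zero_rpow hμ0.ne'
      have := this.continuousWithinAt (s := Ici (0:ℝ))
      rwa [ContinuousWithinAt, h0] at this
  have key : ∫ x in Ioi (0:ℝ), G x = 0 - F 0 :=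
    integral_Ioi_of_hasDerivAt_of_tendsto hcont hderiv hGint htop
  rw [hF0, sub_zero] at key
  have hsplit : ∫ x in Ioi (0:ℝ), G x
      = t * rho (μ - 1) t - rho (μ + 1) t + μ * rho μ t := by
    have J1 : IntegrableOn (fun x : ℝ => t * (Real.exp (-t / x - x) * x ^ (μ - 1 - 1))
        - Real.exp (-t / x - x) * x ^ (μ + 1 - 1)) (Ioi (0:ℝ)) := (I1.const_mul t).sub I2
    have J2 : IntegrableOn (fun x : ℝ => μ * (Real.exp (-t / x - x) * x ^ (μ - 1)))
        (Ioi (0:ℝ)) := I3.const_mul μ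
    have J3 : IntegrableOn (fun x : ℝ => t * (Real.exp (-t / x - x) * x ^ (μ - 1 - 1)))
        (Ioi (0:ℝ)) := I1.const_mul t
    rw [hG]
    rw [integral_add J1 J2, integral_sub J3 I2, integral_const_mul, integral_const_mul]
    rfl
  rw [hsplit] at key
  linarith

theorem stmt_7 (ν t lam : ℝ) (hν : -1 < ν) (ht : 0 ≤ t) (hl : 0 < lam) (hl1 : lam < 1)
    (w : ℕ → ℝ) (hw : ∀ k : ℕ, w k = rho (k + ν + 1) t * lam ^ k / (Nat.factorial k)) :
    ∀ k : ℕ, 2 ≤ k →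
      (k : ℝ) * ((k : ℝ) - 1) * w k - ((k : ℝ) - 1) * ((k : ℝ) + ν) * lam * w (k - 1)
        - t * lam ^ 2 * w (k - 2) = 0 := by
  intro k hk
  obtain ⟨m, rfl⟩ : ∃ m, k = m + 2 := ⟨k - 2, by omega⟩
  have h1 : m + 2 - 1 = m + 1 := by omega
  have h2 : m + 2 - 2 = m := by omega
  rw [h1, h2, hw (m + 2), hw (m + 1), hw m]
  set μ : ℝ := (m : ℝ) + 1 + ν + 1 with hμdef
  have hμ : 1 < μ := by
    have : (0:ℝ) ≤ (m:ℝ) := Nat.cast_nonneg m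
    simp only [hμdef]; linarith
  have hrec := rho_rec hμ ht
  have e1 : ((m + 2 : ℕ) : ℝ) + ν + 1 = μ + 1 := by push_cast; ring
  have e2 : ((m + 1 : ℕ) : ℝ) + ν + 1 = μ := by push_cast; ring
  have e3 : ((m : ℕ) : ℝ) + ν + 1 = μ - 1 := by push_cast [hμdef]; ring
  rw [e1, e2, e3, hrec]
  have hf2 : ((m + 2).factorial : ℝ) = ((m:ℝ) + 2) * ((m:ℝ) + 1) * (m.factorial : ℝ) := by
    rw [Nat.factorial_succ, Nat.factorial_succ]; push_cast; ring
  have hf1 : ((m + 1).factorial : ℝ) = ((m:ℝ) + 1) * (m.factorial : ℝ) := by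
    rw [Nat.factorial_succ]; push_cast; ring
  have hfm : (0:ℝ) < (m.factorial : ℝ) := by exact_mod_cast m.factorial_pos
  rw [hf2, hf1]
  push_cast
  field_simp
  ring
end

section
/- For ν > -1, t > 0, 0 < λ < 1, and n ∈ ℕ₀, the factorial moment γ_n = Σ_{k=n}^∞ ρ_{k+ν+1}(t) λ^k / (k-n)! converges and equals λ^n ρ_{ν+n+1}(t(1-λ)) / (1-λ)^{ν+n+1}. -/
open MeasureTheory Set Real

lemma contOn (t a μ : ℝ) :
    ContinuousOn (fun x : ℝ => Real.exp (-t/x - a*x) * x ^ (μ-1)) (Set.Ioi 0) := by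
  apply ContinuousOn.mul
  · exact Real.continuous_exp.comp_continuousOn
      (((continuousOn_const.div continuousOn_id fun x hx => ne_of_gt hx)).sub
        (continuous_const.mul continuous_id).continuousOn)
  · exact fun x hx =>
      (Real.continuousAt_rpow_const x (μ-1) (Or.inl (ne_of_gt hx))).continuousWithinAt

lemma aux_integrable (t a μ : ℝ) (ht : 0 ≤ t) (ha : 0 < a) (hμ : 0 < μ) :
    MeasureTheory.IntegrableOn (fun x => Real.exp (-t/x - a*x) * x ^ (μ-1)) (Set.Ioi 0) := by
  have hG := Real.GammaIntegral_convergent hμ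
  have h1 : IntegrableOn (fun x => Real.exp (-(a*x)) * (a*x) ^ (μ-1)) (Set.Ioi 0) := by
    have h0 := (integrableOn_Ioi_comp_mul_left_iff (fun x => Real.exp (-x) * x ^ (μ-1)) 0 ha).mpr
    rw [mul_zero] at h0
    simpa using h0 hG
  have h2 : IntegrableOn (fun x => a^(1-μ) * (Real.exp (-(a*x)) * (a*x)^(μ-1))) (Set.Ioi 0) :=
    h1.const_mul _
  refine h2.mono' ((contOn t a μ).aestronglyMeasurable measurableSet_Ioi) ?_
  filter_upwards [ae_restrict_mem measurableSet_Ioi] with x hx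
  have hx0 : (0:ℝ) < x := hx
  have hr : (0:ℝ) ≤ x ^ (μ-1) := Real.rpow_nonneg hx0.le _
  rw [Real.norm_of_nonneg (mul_nonneg (Real.exp_pos _).le hr)]
  have hexp : Real.exp (-t/x - a*x) ≤ Real.exp (-(a*x)) := by
    apply Real.exp_le_exp.mpr
    have : 0 ≤ t / x := div_nonneg ht hx0.le
    rw [neg_div]
    linarith
  calc Real.exp (-t/x - a*x) * x ^ (μ-1) ≤ Real.exp (-(a*x)) * x ^ (μ-1) :=
        mul_le_mul_of_nonneg_right hexp hr
    _ = a^(1-μ) * (Real.exp (-(a*x)) * (a*x)^(μ-1)) := by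
        rw [Real.mul_rpow ha.le hx0.le]
        rw [show a^(1-μ) * (Real.exp (-(a*x)) * (a^(μ-1) * x^(μ-1)))
            = (a^(1-μ) * a^(μ-1)) * (Real.exp (-(a*x)) * x^(μ-1)) by ring,
          ← Real.rpow_add ha]
        norm_num

lemma aux_subst (u a μ : ℝ) (ha : 0 < a) :
    (∫ x in Set.Ioi (0:ℝ), Real.exp (-u/x - a*x) * x^(μ-1)) = rho μ (u*a) / a^μ := by
  have key := integral_comp_mul_left_Ioi (fun y : ℝ => Real.exp (-(u*a)/y - y) * y^(μ-1)) 0 ha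
  simp only [mul_zero, smul_eq_mul] at key
  have hL : (∫ x in Set.Ioi (0:ℝ), Real.exp (-(u*a)/(a*x) - a*x) * (a*x)^(μ-1))
      = ∫ x in Set.Ioi (0:ℝ), a^(μ-1) * (Real.exp (-u/x - a*x) * x^(μ-1)) := by
    apply setIntegral_congr_fun measurableSet_Ioi
    intro x hx
    have hx0 : (0:ℝ) < x := hx
    beta_reduce
    rw [Real.mul_rpow ha.le hx0.le, show -(u*a)/(a*x) = -u/x by field_simp]
    ring
  rw [hL, integral_const_mul] at key
  have hane : a ^ (μ-1) ≠ 0 := (Real.rpow_pos_of_pos ha _).ne'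
  have haμ : a ^ μ = a ^ (μ-1) * a := by
    rw [← Real.rpow_add_one ha.ne']; ring_nf
  rw [haμ, rho] at *
  rw [eq_div_iff (mul_ne_zero hane ha.ne'), ← mul_assoc, mul_comm _ (a^(μ-1)), key]
  field_simp

theorem stmt_12 (ν t lam : ℝ) (hν : -1 < ν) (ht : 0 < t) (hl : 0 < lam) (hl1 : lam < 1)
    (n : ℕ) :
    Summable (fun k : ℕ => rho ((k + n : ℕ) + ν + 1) t * lam ^ (k + n) / (Nat.factorial k)) ∧
    (∑' k : ℕ, rho ((k + n : ℕ) + ν + 1) t * lam ^ (k + n) / (Nat.factorial k))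
      = lam ^ n * rho (ν + n + 1) (t * (1 - lam)) / (1 - lam) ^ (ν + n + 1) := by
  have ha : (0:ℝ) < 1 - lam := by linarith
  set f : ℕ → ℝ → ℝ := fun k x =>
    (Real.exp (-t/x - 1*x) * x ^ (((k + n : ℕ):ℝ) + ν + 1 - 1)) * (lam ^ (k+n) / (Nat.factorial k))
    with hf_def
  have hμpos : ∀ k : ℕ, (0:ℝ) < ((k + n : ℕ):ℝ) + ν + 1 := by
    intro k
    have : (0:ℝ) ≤ ((k + n : ℕ):ℝ) := Nat.cast_nonneg _
    linarith
  have hterm : ∀ k : ℕ,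
      rho ((k + n : ℕ) + ν + 1) t * lam ^ (k + n) / (Nat.factorial k)
        = ∫ x in Set.Ioi (0:ℝ), f k x := by
    intro k
    rw [hf_def, rho, mul_div_assoc, ← integral_mul_const]
    apply setIntegral_congr_fun measurableSet_Ioi
    intro x hx
    simp [one_mul]
  have hmeas : ∀ k : ℕ, AEStronglyMeasurable (f k) (volume.restrict (Set.Ioi 0)) := by
    intro k
    exact ((contOn t 1 (((k + n : ℕ):ℝ) + ν + 1)).mul continuousOn_const).aestronglyMeasurable
      measurableSet_Ioi
  have hint : ∀ k : ℕ, IntegrableOn (f k) (Set.Ioi 0) := by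
    intro k
    exact (aux_integrable t 1 (((k + n : ℕ):ℝ) + ν + 1) ht.le one_pos (hμpos k)).mul_const _
  have hnonneg : ∀ k : ℕ, ∀ x ∈ Set.Ioi (0:ℝ), 0 ≤ f k x := by
    intro k x hx
    have hx0 : (0:ℝ) < x := hx
    apply mul_nonneg (mul_nonneg (Real.exp_pos _).le (Real.rpow_nonneg hx0.le _))
    positivity
  set G : ℝ → ℝ := fun x =>
    lam ^ n * (Real.exp (-t/x - (1-lam)*x) * x ^ ((ν + (n:ℝ) + 1) - 1)) with hG_def
  have hGint : IntegrableOn G (Set.Ioi 0) := by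
    apply Integrable.const_mul
    have hn0 : (0:ℝ) ≤ (n:ℝ) := Nat.cast_nonneg _
    exact aux_integrable t (1-lam) (ν + (n:ℝ) + 1) ht.le ha (by linarith)
  have hfx : ∀ x ∈ Set.Ioi (0:ℝ), ∀ k : ℕ, f k x
      = (Real.exp (-t/x - x) * x ^ ((ν:ℝ) + n) * lam ^ n) * ((lam*x)^k / (Nat.factorial k)) := by
    intro x hx k
    have hx0 : (0:ℝ) < x := hx
    simp only [hf_def]
    have hxe : x ^ (((k + n : ℕ):ℝ) + ν + 1 - 1) = x ^ (k:ℝ) * x ^ ((ν:ℝ) + n) := by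
      rw [← Real.rpow_add hx0]
      congr 1
      push_cast
      ring
    rw [hxe, Real.rpow_natCast, mul_pow, pow_add]
    field_simp
  have hsummx : ∀ x ∈ Set.Ioi (0:ℝ), Summable (fun k : ℕ => f k x) := by
    intro x hx
    exact ((Real.summable_pow_div_factorial (lam*x)).mul_left _).congr
      fun k => (hfx x hx k).symm
  have hsum_pt : ∀ x ∈ Set.Ioi (0:ℝ), (∑' k : ℕ, f k x) = G x := by
    intro x hx
    have hx0 : (0:ℝ) < x := hx
    have hexp : (∑' k : ℕ, (lam*x)^k / (Nat.factorial k)) = Real.exp (lam*x) := by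
      rw [Real.exp_eq_exp_ℝ, NormedSpace.exp_eq_tsum_div]
    rw [tsum_congr (hfx x hx), tsum_mul_left, hexp, hG_def]
    have h2 : Real.exp (-t/x - x) * Real.exp (lam*x) = Real.exp (-t/x - (1-lam)*x) := by
      rw [← Real.exp_add]; ring_nf
    beta_reduce
    rw [show ((ν + (n:ℝ) + 1) - 1) = (ν:ℝ) + n by ring, ← h2]
    ring
  set L : ℕ → ENNReal := fun k => ∫⁻ x in Set.Ioi (0:ℝ), ‖f k x‖₊ with hL_def
  have hL : ∀ k, L k = ENNReal.ofReal (∫ x in Set.Ioi (0:ℝ), f k x) := by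
    intro k
    rw [ofReal_integral_eq_lintegral_ofReal (hint k)
      ((ae_restrict_iff' measurableSet_Ioi).mpr (ae_of_all _ (hnonneg k)))]
    apply lintegral_congr_ae
    filter_upwards [ae_restrict_mem measurableSet_Ioi] with x hx
    rw [← enorm_eq_nnnorm, ← ofReal_norm, Real.norm_of_nonneg (hnonneg k x hx)]
  have hGnn : 0 ≤ᵐ[volume.restrict (Set.Ioi (0:ℝ))] G := by
    filter_upwards [ae_restrict_mem measurableSet_Ioi] with x hx
    have hx0 : (0:ℝ) < x := hx
    apply mul_nonneg (by positivity)
    exact mul_nonneg (Real.exp_pos _).le (Real.rpow_nonneg hx0.le _)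
  have hLsum : (∑' k : ℕ, L k) ≠ ⊤ := by
    rw [hL_def, ← lintegral_tsum (f := fun k x => (‖f k x‖₊ : ENNReal)) fun k => (hmeas k).enorm]
    have key : (∫⁻ x in Set.Ioi (0:ℝ), ∑' k : ℕ, (‖f k x‖₊ : ENNReal))
        = ENNReal.ofReal (∫ x in Set.Ioi (0:ℝ), G x) := by
      rw [ofReal_integral_eq_lintegral_ofReal hGint hGnn]
      apply lintegral_congr_ae
      filter_upwards [ae_restrict_mem measurableSet_Ioi] with x hx
      calc (∑' k : ℕ, (‖f k x‖₊ : ENNReal)) = ∑' k : ℕ, ENNReal.ofReal (f k x) :=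
            tsum_congr fun k => by
              rw [← enorm_eq_nnnorm, ← ofReal_norm, Real.norm_of_nonneg (hnonneg k x hx)]
        _ = ENNReal.ofReal (∑' k : ℕ, f k x) :=
            (ENNReal.ofReal_tsum_of_nonneg (fun k => hnonneg k x hx) (hsummx x hx)).symm
        _ = ENNReal.ofReal (G x) := by rw [hsum_pt x hx]
    rw [key]
    exact ENNReal.ofReal_ne_top
  constructor
  · refine (ENNReal.summable_toReal hLsum).congr fun k => ?_
    rw [hL k, ENNReal.toReal_ofReal (setIntegral_nonneg measurableSet_Ioi (hnonneg k)),
      ← hterm k]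
  · calc (∑' k : ℕ, rho ((k + n : ℕ) + ν + 1) t * lam ^ (k + n) / (Nat.factorial k))
        = ∑' k : ℕ, ∫ x in Set.Ioi (0:ℝ), f k x := tsum_congr hterm
      _ = ∫ x in Set.Ioi (0:ℝ), ∑' k : ℕ, f k x := (integral_tsum hmeas hLsum).symm
      _ = ∫ x in Set.Ioi (0:ℝ), G x := setIntegral_congr_fun measurableSet_Ioi hsum_pt
      _ = lam ^ n * ∫ x in Set.Ioi (0:ℝ),
            Real.exp (-t/x - (1-lam)*x) * x ^ ((ν + (n:ℝ) + 1) - 1) := by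
          rw [hG_def, integral_const_mul]
      _ = lam ^ n * (rho (ν + (n:ℝ) + 1) (t * (1-lam)) / (1-lam) ^ (ν + (n:ℝ) + 1)) := by
          rw [aux_subst t (1-lam) (ν + (n:ℝ) + 1) ha]
      _ = lam ^ n * rho (ν + n + 1) (t * (1 - lam)) / (1 - lam) ^ (ν + n + 1) := by
          rw [mul_div_assoc]
end

section
/- Let ν > -1, t > 0, 0 < λ < 1, and let P be a polynomial with real coefficients of degree n satisfying Σ_{k=0}^∞ P(k) ρ_{k+ν+1}(t) λ^k k^j / k! = 0 for j = 0,…,n-1. Then for each such j, ∫₀^∞ e^{-t/x - x} x^ν · P(xD)((xD)^j e^{λx}) dx = 0, where P(xD) applies the operator x·d/dx according to the polynomial P. -/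
/-- The operator $f \mapsto x f'(x)$. -/
noncomputable def xD (f : ℝ → ℝ) : ℝ → ℝ := fun x => x * deriv f x

/-- For a polynomial $P(y)=\sum_m a_m y^m$, the operator $P(xD)$. -/
noncomputable def polyXD (P : Polynomial ℝ) (f : ℝ → ℝ) : ℝ → ℝ := fun x =>
  ∑ m ∈ Finset.range (P.natDegree + 1), P.coeff m * (xD^[m] f) x

/-! ### Auxiliary development -/

open MeasureTheory

/-- The Touchard-type polynomials: `touch m (z) * e^z = ∑ k^m z^k / k!`. -/
noncomputable def touch : ℕ → Polynomial ℝ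
  | 0 => 1
  | (m+1) => Polynomial.X * (touch m + Polynomial.derivative (touch m))

lemma xD_iter_exp (lam : ℝ) (m : ℕ) :
    xD^[m] (fun y => Real.exp (lam * y)) =
      fun x => (touch m).eval (lam * x) * Real.exp (lam * x) := by
  induction m with
  | zero => funext x; simp [touch]
  | succ m ih =>
    rw [Function.iterate_succ_apply', ih]
    funext x
    have hin : HasDerivAt (fun x : ℝ => lam * x) lam x := by
      simpa using (hasDerivAt_id x).const_mul lam
    have hp : HasDerivAt (fun x : ℝ => (touch m).eval (lam * x))
        ((Polynomial.derivative (touch m)).eval (lam * x) * lam) x :=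
      ((touch m).hasDerivAt (lam * x)).comp x hin
    have he : HasDerivAt (fun x : ℝ => Real.exp (lam * x))
        (Real.exp (lam * x) * lam) x := (Real.hasDerivAt_exp (lam * x)).comp x hin
    have h : HasDerivAt (fun x : ℝ => (touch m).eval (lam * x) * Real.exp (lam * x)) _ x :=
      hp.mul he
    simp only [xD, h.deriv, touch]
    simp [Polynomial.eval_mul, Polynomial.eval_add]
    ring

lemma touch_coeff_sum (m : ℕ) : ∀ k : ℕ, ∑ i ∈ Finset.range (k+1),
    (touch m).coeff i / (Nat.factorial (k - i)) = (k : ℝ)^m / (Nat.factorial k) := by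
  induction m with
  | zero =>
    intro k
    rw [Finset.sum_eq_single 0]
    · simp [touch]
    · intro i _ hi; simp [touch, Polynomial.coeff_one, hi]
    · simp
  | succ m ih =>
    intro k
    match k with
    | 0 => simp [touch, Polynomial.mul_coeff_zero]
    | K + 1 =>
      set Q := touch m with hQ
      have peel : ∑ i ∈ Finset.range (K+2), (touch (m+1)).coeff i / (Nat.factorial (K+1-i))
          = ∑ i ∈ Finset.range (K+1), (Q.coeff i + (Polynomial.derivative Q).coeff i)
              / (Nat.factorial (K-i)) := by
        rw [Finset.sum_range_succ']
        have h0 : (touch (m+1)).coeff 0 = 0 := by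
          simp [touch, Polynomial.mul_coeff_zero]
        rw [h0]
        simp only [touch, Polynomial.coeff_X_mul, Nat.succ_sub_succ, Polynomial.coeff_add]
        simp
        rw [← hQ]
      rw [peel]
      simp only [add_div]
      rw [Finset.sum_add_distrib]
      have h1 : ∑ i ∈ Finset.range (K+1), Q.coeff i / (Nat.factorial (K-i))
          = (K:ℝ)^m / (Nat.factorial K) := ih K
      have h2 : ∑ i ∈ Finset.range (K+1),
          (Polynomial.derivative Q).coeff i / (Nat.factorial (K-i))
          = ((K:ℝ)+1)^(m+1) / (Nat.factorial (K+1)) - (K:ℝ)^m / (Nat.factorial K) := by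
        have hT : ∑ i ∈ Finset.range (K+1),
            (Polynomial.derivative Q).coeff i / (Nat.factorial (K-i))
            = ∑ i ∈ Finset.range (K+2), (i:ℝ) * Q.coeff i / (Nat.factorial (K+1-i)) := by
          rw [Finset.sum_range_succ' (fun i => (i:ℝ) * Q.coeff i / (Nat.factorial (K+1-i))) (K+1)]
          simp only [Polynomial.coeff_derivative, Nat.cast_zero, zero_mul, zero_div, add_zero,
            Nat.succ_sub_succ, Nat.cast_add, Nat.cast_one]
          apply Finset.sum_congr rfl
          intro i _
          ring
        have hsplit : ∀ i ∈ Finset.range (K+2),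
            (i:ℝ) * Q.coeff i / (Nat.factorial (K+1-i))
            = ((K:ℝ)+1) * (Q.coeff i / (Nat.factorial (K+1-i)))
              - ((K+1-i : ℕ):ℝ) * Q.coeff i / (Nat.factorial (K+1-i)) := by
          intro i hi
          have : i ≤ K+1 := by
            have := Finset.mem_range.mp hi; omega
          rw [Nat.cast_sub this]
          push_cast
          ring
        rw [hT, Finset.sum_congr rfl hsplit, Finset.sum_sub_distrib, ← Finset.mul_sum]
        have hU : ∑ i ∈ Finset.range (K+2),
            ((K+1-i : ℕ):ℝ) * Q.coeff i / (Nat.factorial (K+1-i))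
            = ∑ i ∈ Finset.range (K+1), Q.coeff i / (Nat.factorial (K-i)) := by
          rw [Finset.sum_range_succ]
          simp only [Nat.sub_self, Nat.cast_zero, zero_mul, zero_div, add_zero]
          apply Finset.sum_congr rfl
          intro i hi
          have hik : i ≤ K := by have := Finset.mem_range.mp hi; omega
          have hs : K + 1 - i = (K - i) + 1 := by omega
          have hc : ((K+1-i : ℕ):ℝ) = ((K-i : ℕ):ℝ) + 1 := by rw [hs]; push_cast; ring
          have hf : ((Nat.factorial (K+1-i)) : ℝ)
              = (((K-i : ℕ):ℝ) + 1) * (Nat.factorial (K-i)) := by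
            rw [hs, Nat.factorial_succ]; push_cast; ring
          have hne : ((K - i : ℕ):ℝ) + 1 ≠ 0 := by positivity
          rw [hc, hf, mul_div_mul_left _ _ hne]
        rw [hU, ih (K+1), ih K]
        push_cast
        ring
      rw [h1, h2]
      push_cast
      ring

lemma summable_aux (M : ℕ) (w : ℝ) :
    Summable (fun k : ℕ => (k:ℝ)^M * w^k / (Nat.factorial k)) := by
  have hs : Summable (fun k : ℕ => (k:ℝ)^M * (1/2:ℝ)^k) := by
    simpa using summable_pow_mul_geometric_of_norm_lt_one M (r := (1/2:ℝ)) (by norm_num)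
  set C := ∑' k : ℕ, (k:ℝ)^M * (1/2:ℝ)^k with hCdef
  have hC : ∀ k : ℕ, (k:ℝ)^M * (1/2:ℝ)^k ≤ C := fun k =>
    Summable.le_tsum hs k (fun j _ => by positivity)
  apply Summable.of_abs
  apply Summable.of_nonneg_of_le (fun k => abs_nonneg _) (fun k => ?_)
    ((Real.summable_pow_div_factorial (2*|w|)).mul_left C)
  have h2k : (2:ℝ)^k ≠ 0 := by positivity
  have hkf : (0:ℝ) < (Nat.factorial k : ℝ) := by positivity
  have habs : |(k:ℝ)^M * w^k / (Nat.factorial k)|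
      = (k:ℝ)^M * |w|^k / (Nat.factorial k) := by
    rw [abs_div, abs_mul, abs_pow, abs_pow, Nat.abs_cast, abs_of_pos hkf]
  rw [habs]
  have key : (k:ℝ)^M * |w|^k / (Nat.factorial k)
      = ((k:ℝ)^M * (1/2:ℝ)^k) * ((2*|w|)^k / (Nat.factorial k)) := by
    rw [mul_pow]
    field_simp
    have h12 : ((1:ℝ)/2)^k * 2^k = 1 := by rw [← mul_pow]; norm_num
    linear_combination (-((k:ℝ) ^ M * |w| ^ k)) * h12
  rw [key]
  exact mul_le_mul_of_nonneg_right (hC k) (by positivity)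

lemma exp_tsum (z : ℝ) : Real.exp z = ∑' k : ℕ, z^k / (Nat.factorial k) := by
  rw [Real.exp_eq_exp_ℝ, NormedSpace.exp_eq_tsum_div]

lemma pow_div_fact_le_exp (y : ℝ) (hy : 0 ≤ y) (k : ℕ) :
    y^k / (Nat.factorial k) ≤ Real.exp y :=
  (Summable.le_tsum (Real.summable_pow_div_factorial y) k fun i _ => by positivity).trans_eq
    (exp_tsum y).symm

lemma touch_eval_mul_exp (m : ℕ) (z : ℝ) :
    (touch m).eval z * Real.exp z = ∑' k : ℕ, (k:ℝ)^m * z^k / (Nat.factorial k) := by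
  classical
  set d := (touch m).natDegree with hd
  set g : ℕ → ℕ → ℝ := fun i K => (touch m).coeff i * z^K *
    (if i ≤ K then ((Nat.factorial (K-i) : ℝ))⁻¹ else 0) with hg
  have hsupp : ∀ i : ℕ, ∀ K ∉ Set.range (fun k => i + k), g i K = 0 := by
    intro i K hK
    have : ¬ i ≤ K := by
      intro h
      exact hK ⟨K - i, show i + (K - i) = K by omega⟩
    simp [hg, this]
  have hinj : ∀ i : ℕ, Function.Injective (fun k => i + k) :=
    fun i => add_right_injective i
  have hsub : ∀ i : ℕ, Function.support (g i) ⊆ Set.range (fun k => i + k) := by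
    intro i K hK
    by_contra h
    exact hK (hsupp i K h)
  have hcomp : ∀ i : ℕ, (g i ∘ fun k => i + k)
      = fun k => (touch m).coeff i * z^i * (z^k / (Nat.factorial k)) := by
    intro i
    funext k
    simp only [Function.comp, hg, if_pos (Nat.le_add_right i k), Nat.add_sub_cancel_left]
    rw [pow_add]
    ring
  have hsummable : ∀ i : ℕ, Summable (g i) := by
    intro i
    rw [← Function.Injective.summable_iff (hinj i) (hsupp i), hcomp i]
    exact (Real.summable_pow_div_factorial z).mul_left _
  have claim1 : ∀ i : ℕ, (touch m).coeff i * z^i * Real.exp z = ∑' K, g i K := by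
    intro i
    rw [exp_tsum, ← tsum_mul_left,
      ← Function.Injective.tsum_eq (hinj i) (hsub i)]
    exact tsum_congr fun k => (congrFun (hcomp i) k).symm
  have claim3 : ∀ K : ℕ, ∑ i ∈ Finset.range (d+1), g i K
      = (K:ℝ)^m * z^K / (Nat.factorial K) := by
    intro K
    have e1 : ∑ i ∈ Finset.range (d+1), g i K = ∑ i ∈ Finset.range (d+K+2), g i K := by
      apply Finset.sum_subset (Finset.range_subset_range.mpr (by omega))
      intro i _ hi
      have hdi : d < i := by
        have := Finset.mem_range.not.mp hi
        omega
      simp [hg, Polynomial.coeff_eq_zero_of_natDegree_lt hdi]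
    have e2 : ∑ i ∈ Finset.range (K+1), g i K = ∑ i ∈ Finset.range (d+K+2), g i K := by
      apply Finset.sum_subset (Finset.range_subset_range.mpr (by omega))
      intro i _ hi
      have hKi : ¬ i ≤ K := by
        have := Finset.mem_range.not.mp hi
        omega
      simp [hg, hKi]
    rw [e1, ← e2]
    have e3 : ∀ i ∈ Finset.range (K+1), g i K
        = z^K * ((touch m).coeff i / (Nat.factorial (K-i))) := by
      intro i hi
      have : i ≤ K := by
        have := Finset.mem_range.mp hi
        omega
      simp only [hg, if_pos this]
      ring
    rw [Finset.sum_congr rfl e3, ← Finset.mul_sum, touch_coeff_sum m K]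
    ring
  calc (touch m).eval z * Real.exp z
      = ∑ i ∈ Finset.range (d+1), (touch m).coeff i * z^i * Real.exp z := by
        rw [Polynomial.eval_eq_sum_range, Finset.sum_mul]
    _ = ∑ i ∈ Finset.range (d+1), ∑' K, g i K :=
        Finset.sum_congr rfl (fun i _ => claim1 i)
    _ = ∑' K, ∑ i ∈ Finset.range (d+1), g i K := (Summable.tsum_finsetSum (fun i _ => hsummable i)).symm
    _ = ∑' K : ℕ, (K:ℝ)^m * z^K / (Nat.factorial K) := tsum_congr claim3

lemma polyXD_tsum (P : Polynomial ℝ) (j : ℕ) (lam x : ℝ) :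
    polyXD P (xD^[j] fun y : ℝ => Real.exp (lam * y)) x
      = ∑' k : ℕ, P.eval (k:ℝ) * (k:ℝ)^j * (lam*x)^k / (Nat.factorial k) := by
  have h1 : ∀ m : ℕ, (xD^[m] (xD^[j] fun y : ℝ => Real.exp (lam*y))) x
      = ∑' k : ℕ, (k:ℝ)^(m+j) * (lam*x)^k / (Nat.factorial k) := by
    intro m
    rw [← Function.iterate_add_apply, xD_iter_exp]
    exact touch_eval_mul_exp (m+j) (lam*x)
  simp only [polyXD, h1]
  have e1 : ∀ m ∈ Finset.range (P.natDegree + 1),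
      P.coeff m * ∑' k : ℕ, (k:ℝ)^(m+j) * (lam*x)^k / (Nat.factorial k)
      = ∑' k : ℕ, P.coeff m * ((k:ℝ)^(m+j) * (lam*x)^k / (Nat.factorial k)) :=
    fun m _ => tsum_mul_left.symm
  rw [Finset.sum_congr rfl e1,
    ← Summable.tsum_finsetSum (fun m _ => (summable_aux (m+j) (lam*x)).mul_left (P.coeff m))]
  apply tsum_congr
  intro k
  rw [Polynomial.eval_eq_sum_range, Finset.sum_mul, Finset.sum_mul, Finset.sum_div]
  apply Finset.sum_congr rfl
  intro m _
  rw [pow_add]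
  ring

lemma integrable_kernel (t μ : ℝ) (ht : 0 ≤ t) (hμ : 0 < μ) :
    IntegrableOn (fun x : ℝ => Real.exp (-t/x - x) * x ^ (μ-1)) (Set.Ioi 0) := by
  have hΓ : IntegrableOn (fun x : ℝ => Real.exp (-x) * x ^ (μ-1)) (Set.Ioi 0) :=
    Real.GammaIntegral_convergent hμ
  apply hΓ.mono' ?_ ?_
  · apply Measurable.aestronglyMeasurable
    fun_prop
  · filter_upwards [ae_restrict_mem measurableSet_Ioi] with x hx
    have hx0 : (0:ℝ) < x := hx
    rw [Real.norm_eq_abs, abs_mul, abs_of_pos (Real.exp_pos _),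
      abs_of_pos (Real.rpow_pos_of_pos hx0 _)]
    apply mul_le_mul_of_nonneg_right _ (Real.rpow_pos_of_pos hx0 _).le
    apply Real.exp_le_exp.mpr
    have h0 : 0 ≤ t / x := div_nonneg ht hx0.le
    have h1 : -t/x = -(t/x) := neg_div x t
    linarith

lemma integrable_exp_neg_mul_rpow (c ν : ℝ) (hc : 0 < c) (hν : -1 < ν) :
    IntegrableOn (fun x : ℝ => Real.exp (-(c*x)) * x ^ ν) (Set.Ioi 0) := by
  have h1 : IntegrableOn (fun x : ℝ => Real.exp (-x) * x ^ ν) (Set.Ioi 0) := by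
    have := Real.GammaIntegral_convergent (s := ν + 1) (by linarith)
    simpa using this
  have h2 : IntegrableOn (fun x : ℝ => Real.exp (-(c*x)) * (c*x) ^ ν) (Set.Ioi 0) := by
    have := (integrableOn_Ioi_comp_mul_left_iff
      (fun y : ℝ => Real.exp (-y) * y ^ ν) 0 hc).mpr (by simpa using h1)
    simpa using this
  have h3 := h2.const_mul ((c ^ ν)⁻¹)
  apply IntegrableOn.congr_fun h3 ?_ measurableSet_Ioi
  intro x hx
  have hx0 : (0:ℝ) < x := hx
  have hcx : (c*x) ^ ν = c ^ ν * x ^ ν := Real.mul_rpow hc.le hx0.le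
  have hcν : c ^ ν ≠ 0 := (Real.rpow_pos_of_pos hc _).ne'
  dsimp only
  rw [hcx]
  field_simp

theorem stmt_16 (ν t lam : ℝ) (hν : -1 < ν) (ht : 0 < t) (hl : 0 < lam) (hl1 : lam < 1)
    (n : ℕ) (P : Polynomial ℝ) (hdeg : P.natDegree = n)
    (horth : ∀ j < n,
      ∑' k : ℕ, P.eval (k : ℝ) * rho (k + ν + 1) t * lam ^ k * (k : ℝ) ^ j
        / (Nat.factorial k) = 0) :
    ∀ j < n,
      ∫ x in Set.Ioi (0 : ℝ),
        Real.exp (-t / x - x) * x ^ ν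
          * polyXD P (xD^[j] fun y : ℝ => Real.exp (lam * y)) x = 0 := by
  intro j hj
  classical
  set c : ℕ → ℝ := fun k => P.eval (k:ℝ) * (k:ℝ)^j * lam^k / (Nat.factorial k) with hcdef
  set f : ℕ → ℝ → ℝ :=
    fun k x => Real.exp (-t/x - x) * x ^ ν * (c k * x ^ k) with hfdef
  have hpt : ∀ x : ℝ, Real.exp (-t / x - x) * x ^ ν
      * polyXD P (xD^[j] fun y : ℝ => Real.exp (lam * y)) x = ∑' k, f k x := by
    intro x
    rw [polyXD_tsum P j lam x, ← tsum_mul_left]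
    apply tsum_congr
    intro k
    simp only [hfdef, hcdef]
    rw [mul_pow]
    ring
  have hEq : ∀ k : ℕ, Set.EqOn (f k)
      (fun x => c k * (Real.exp (-t/x - x) * x ^ ((k:ℝ) + ν + 1 - 1))) (Set.Ioi 0) := by
    intro k x hx
    have hx0 : (0:ℝ) < x := hx
    have hxp : x ^ ((k:ℝ) + ν + 1 - 1) = x ^ ν * x ^ (k:ℕ) := by
      rw [← Real.rpow_natCast x k, ← Real.rpow_add hx0]
      ring_nf
    simp only [hfdef]
    rw [hxp]
    ring
  have hμpos : ∀ k : ℕ, (0:ℝ) < (k:ℝ) + ν + 1 := by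
    intro k
    have : (0:ℝ) ≤ (k:ℝ) := Nat.cast_nonneg k
    linarith
  have hint : ∀ k : ℕ, IntegrableOn (f k) (Set.Ioi 0) := by
    intro k
    have h1 := (integrable_kernel t ((k:ℝ)+ν+1) ht.le (hμpos k)).const_mul (c k)
    exact IntegrableOn.congr_fun h1 (fun x hx => (hEq k hx).symm) measurableSet_Ioi
  set eps : ℝ := (1+lam)/2 with hepsdef
  have heps0 : 0 < eps := by rw [hepsdef]; linarith
  have hlte : lam < eps := by rw [hepsdef]; linarith
  have heps1 : eps < 1 := by rw [hepsdef]; linarith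
  have hC : IntegrableOn (fun x : ℝ => Real.exp (-((1-eps)*x)) * x ^ ν) (Set.Ioi 0) :=
    integrable_exp_neg_mul_rpow (1-eps) ν (by linarith) hν
  set I := ∫ x in Set.Ioi (0:ℝ), Real.exp (-((1-eps)*x)) * x ^ ν with hIdef
  have hI0 : 0 ≤ I := setIntegral_nonneg measurableSet_Ioi (fun x hx => by
      have hx0 : (0:ℝ) < x := hx
      positivity)
  have hineq : ∀ k : ℕ, ∀ x ∈ Set.Ioi (0:ℝ), ‖f k x‖ ≤
      |c k| * ((Nat.factorial k : ℝ) * (eps⁻¹)^k)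
        * (Real.exp (-((1-eps)*x)) * x ^ ν) := by
    intro k x hx
    have hx0 : (0:ℝ) < x := hx
    have hxν : (0:ℝ) ≤ x ^ ν := (Real.rpow_pos_of_pos hx0 ν).le
    have hnorm : ‖f k x‖ = Real.exp (-t/x - x) * x ^ ν * (|c k| * x ^ k) := by
      simp only [hfdef]
      rw [Real.norm_eq_abs, abs_mul, abs_mul, abs_of_pos (Real.exp_pos _),
        abs_of_nonneg hxν, abs_mul, abs_pow, abs_of_pos hx0]
    rw [hnorm]
    have hexp : Real.exp (-t/x - x) ≤ Real.exp (-x) := by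
      apply Real.exp_le_exp.mpr
      have h0 : 0 ≤ t / x := div_nonneg ht.le hx0.le
      have h1 : -t/x = -(t/x) := neg_div x t
      linarith
    have hpow : x ^ k ≤ (Nat.factorial k : ℝ) * (eps⁻¹)^k * Real.exp (eps * x) := by
      have h2 := pow_div_fact_le_exp (eps*x) (by positivity) k
      rw [mul_pow] at h2
      have h4 : (0:ℝ) < (Nat.factorial k : ℝ) := by positivity
      rw [div_le_iff₀ h4] at h2
      calc x ^ k = (eps⁻¹)^k * (eps^k * x^k) := by
            rw [← mul_assoc, ← mul_pow, inv_mul_cancel₀ heps0.ne', one_pow, one_mul]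
        _ ≤ (eps⁻¹)^k * (Real.exp (eps*x) * (Nat.factorial k : ℝ)) :=
            mul_le_mul_of_nonneg_left h2 (by positivity)
        _ = (Nat.factorial k : ℝ) * (eps⁻¹)^k * Real.exp (eps * x) := by ring
    have hee : Real.exp (-x) * Real.exp (eps*x) = Real.exp (-((1-eps)*x)) := by
      rw [← Real.exp_add]
      congr 1
      ring
    calc Real.exp (-t/x - x) * x ^ ν * (|c k| * x ^ k)
        ≤ Real.exp (-x) * x ^ ν * (|c k| * ((Nat.factorial k : ℝ) * (eps⁻¹)^k
            * Real.exp (eps * x))) := by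
          apply mul_le_mul (mul_le_mul_of_nonneg_right hexp hxν)
            (mul_le_mul_of_nonneg_left hpow (abs_nonneg _)) (by positivity) (by positivity)
      _ = |c k| * ((Nat.factorial k : ℝ) * (eps⁻¹)^k)
            * (Real.exp (-((1-eps)*x)) * x ^ ν) := by
          rw [← hee]
          ring
  have hbound : ∀ k : ℕ, (∫ x in Set.Ioi (0:ℝ), ‖f k x‖)
      ≤ |c k| * ((Nat.factorial k : ℝ) * (eps⁻¹)^k) * I := by
    intro k
    have h := setIntegral_mono_on ((hint k).norm) (hC.const_mul _) measurableSet_Ioi (hineq k)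
    rwa [integral_const_mul] at h
  set B := ∑ m ∈ Finset.range (n+1), |P.coeff m| with hBdef
  have hB0 : 0 ≤ B := Finset.sum_nonneg fun m _ => abs_nonneg _
  have hPk : ∀ k : ℕ, |P.eval (k:ℝ)| ≤ B * ((k:ℝ)+1)^n := by
    intro k
    rw [Polynomial.eval_eq_sum_range, hdeg]
    calc |∑ m ∈ Finset.range (n+1), P.coeff m * (k:ℝ)^m|
        ≤ ∑ m ∈ Finset.range (n+1), |P.coeff m * (k:ℝ)^m| := Finset.abs_sum_le_sum_abs _ _
      _ ≤ ∑ m ∈ Finset.range (n+1), |P.coeff m| * ((k:ℝ)+1)^n := by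
          apply Finset.sum_le_sum
          intro m hm
          rw [abs_mul, abs_pow, Nat.abs_cast]
          apply mul_le_mul_of_nonneg_left _ (abs_nonneg _)
          calc (k:ℝ)^m ≤ ((k:ℝ)+1)^m :=
                pow_le_pow_left₀ (Nat.cast_nonneg k) (by linarith) m
            _ ≤ ((k:ℝ)+1)^n := by
                apply pow_le_pow_right₀ ?_ (Finset.mem_range_succ_iff.mp hm)
                have := Nat.cast_nonneg (α := ℝ) k
                linarith
      _ = B * ((k:ℝ)+1)^n := by rw [hBdef, Finset.sum_mul]
  set r : ℝ := lam / eps with hrdef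
  have hr0 : 0 < r := div_pos hl heps0
  have hr1 : r < 1 := (div_lt_one heps0).mpr hlte
  have hgeo : Summable (fun k : ℕ => ((k:ℝ)+1)^(n+j) * r^k) := by
    have h1 : Summable (fun k : ℕ => (k:ℝ)^(n+j) * r^k) := by
      simpa using summable_pow_mul_geometric_of_norm_lt_one (n+j) (r := r)
        (by rw [Real.norm_eq_abs, abs_of_pos hr0]; exact hr1)
    have h2 := (summable_nat_add_iff 1).mpr h1
    have h3 := h2.mul_left r⁻¹
    apply h3.congr
    intro k
    push_cast
    rw [pow_succ]
    field_simp
    try ring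
  have hmaj : Summable (fun k : ℕ => B * (((k:ℝ)+1)^(n+j) * r^k) * I) :=
    (hgeo.mul_left B).mul_right I
  have hnn : ∀ k : ℕ, 0 ≤ ∫ x in Set.Ioi (0:ℝ), ‖f k x‖ := fun k =>
    setIntegral_nonneg measurableSet_Ioi fun x _ => norm_nonneg _
  have hterm : ∀ k : ℕ, |c k| * ((Nat.factorial k : ℝ) * (eps⁻¹)^k) * I
      ≤ B * (((k:ℝ)+1)^(n+j) * r^k) * I := by
    intro k
    apply mul_le_mul_of_nonneg_right _ hI0
    have hfk : ((Nat.factorial k : ℕ) : ℝ) ≠ 0 := by positivity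
    have hrpow : r^k = lam^k * (eps⁻¹)^k := by
      rw [hrdef, div_eq_mul_inv, mul_pow]
    have hck : |c k| * ((Nat.factorial k : ℝ) * (eps⁻¹)^k)
        = |P.eval (k:ℝ)| * (k:ℝ)^j * r^k := by
      simp only [hcdef]
      rw [abs_div, abs_mul, abs_mul, abs_pow, abs_pow, Nat.abs_cast, Nat.abs_cast,
        abs_of_pos hl, hrpow]
      field_simp
      try ring
    rw [hck]
    calc |P.eval (k:ℝ)| * (k:ℝ)^j * r^k
        ≤ (B * ((k:ℝ)+1)^n) * ((k:ℝ)+1)^j * r^k := by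
          apply mul_le_mul_of_nonneg_right _ (pow_nonneg hr0.le k)
          apply mul_le_mul (hPk k)
            (pow_le_pow_left₀ (Nat.cast_nonneg k) (by linarith) j)
            (by positivity) (by positivity)
      _ = B * (((k:ℝ)+1)^(n+j) * r^k) := by rw [pow_add]; ring
  have hsumnorm : Summable (fun k : ℕ => ∫ x in Set.Ioi (0:ℝ), ‖f k x‖) :=
    Summable.of_nonneg_of_le hnn (fun k => (hbound k).trans (hterm k)) hmaj
  have hswap := integral_tsum_of_summable_integral_norm hint hsumnorm
  have hval : ∀ k : ℕ, (∫ x in Set.Ioi (0:ℝ), f k x)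
      = P.eval (k:ℝ) * rho ((k:ℝ) + ν + 1) t * lam^k * (k:ℝ)^j / (Nat.factorial k) := by
    intro k
    rw [setIntegral_congr_fun measurableSet_Ioi (hEq k), integral_const_mul]
    simp only [rho, hcdef]
    ring
  calc ∫ x in Set.Ioi (0:ℝ), Real.exp (-t/x - x) * x ^ ν
        * polyXD P (xD^[j] fun y : ℝ => Real.exp (lam * y)) x
      = ∫ x in Set.Ioi (0:ℝ), ∑' k, f k x :=
        integral_congr_ae (Filter.Eventually.of_forall hpt)
    _ = ∑' k, ∫ x in Set.Ioi (0:ℝ), f k x := hswap.symm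
    _ = ∑' k : ℕ, P.eval (k:ℝ) * rho ((k:ℝ) + ν + 1) t * lam^k * (k:ℝ)^j
          / (Nat.factorial k) := tsum_congr hval
    _ = 0 := horth j hj
end
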